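/- arXiv:2404.09409 — 3 statements merged into one kernel-verified Lean document; each statement's English description precedes it below -/
import Mathlib

section
/- For the exploration process of the diluted mixed p-spin random hypergraph started at a fixed vertex i, for every t ∈ ℤ_+: E|I_t| ≤ λ^t and E|I_t|² ≤ Σ_{k=t}^{2t} λ^k + λ′ · Σ_{k=t−1}^{2(t−1)} λ^k, where λ = Σ_{2≤p≤Δ} p(p−1)α_p, λ′ = Σ_{2≤p≤Δ} p(p−1)(p−2)α_p, and empty sums are interpreted as 0. -/
open MeasureTheory ProbabilityTheory Real Finset

noncomputable section

/-! ### Basic objects: spins, Hermite polynomials, Gaussian measures -/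

/-- The `±1` spin value attached to a Boolean. -/
def spin (b : Bool) : ℝ := if b then 1 else -1

/-- Normalized Hermite polynomial `h_m = He_m / √(m!)`,
orthonormal w.r.t. the standard Gaussian measure. -/
def hermiteFn (m : ℕ) (x : ℝ) : ℝ :=
  Polynomial.aeval x (Polynomial.hermite m) / Real.sqrt (Nat.factorial m)

/-- The law of a family of i.i.d. standard Gaussians over a finite index set. -/
def gaussianPi (ι : Type*) [Fintype ι] : Measure (ι → ℝ) :=
  Measure.pi fun _ => gaussianReal 0 1

instance (ι : Type*) [Fintype ι] : IsProbabilityMeasure (gaussianPi ι) := by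
  unfold gaussianPi; infer_instance

/-- Tensorized normalized Hermite polynomial `h_n(x) = ∏_e h_{n_e}(x_e)`. -/
def hermiteProd {ι : Type*} [Fintype ι] (n : ι → ℕ) (x : ι → ℝ) : ℝ :=
  ∏ e, hermiteFn (n e) (x e)

/-- Continuous perturbation `J(t) = e^{-t} J + √(1-e^{-2t}) J'` of the disorder. -/
def contPerturb {ι : Type*} (t : ℝ) (J J' : ι → ℝ) : ι → ℝ := fun e =>
  Real.exp (-t) * J e + Real.sqrt (1 - Real.exp (-2 * t)) * J' e

/-- Discrete perturbation `J(t)_e = B_e J_e + (1-B_e) J'_e` of the disorder. -/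
def discPerturb {ι : Type*} (J J' : ι → ℝ) (B : ι → Bool) : ι → ℝ := fun e =>
  if B e then J e else J' e

/-- Bernoulli measure on `Bool` with success probability `p`. -/
def berBool (p : ℝ) : Measure Bool :=
  ENNReal.ofReal p • Measure.dirac true + ENNReal.ofReal (1 - p) • Measure.dirac false

instance (p : ℝ) : IsFiniteMeasure (berBool p) := by
  constructor
  simp only [berBool, Measure.coe_add, Pi.add_apply, Measure.smul_apply, smul_eq_mul,
    Measure.dirac_apply' _ MeasurableSet.univ, Set.indicator_univ, Pi.one_apply, mul_one]
  exact ENNReal.add_lt_top.mpr ⟨ENNReal.ofReal_lt_top, ENNReal.ofReal_lt_top⟩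

/-- Product Gaussian measure for a pair `(J, J')` of independent disorders. -/
def pairGauss (ι : Type*) [Fintype ι] : Measure ((ι → ℝ) × (ι → ℝ)) :=
  (gaussianPi ι).prod (gaussianPi ι)

/-- Product Gaussian measure for a triple of independent disorders. -/
def tripleGauss (ι : Type*) [Fintype ι] : Measure ((ι → ℝ) × (ι → ℝ) × (ι → ℝ)) :=
  (gaussianPi ι).prod ((gaussianPi ι).prod (gaussianPi ι))

/-- Law of `(J, J', B)`: two independent Gaussian disorders together with i.i.d.
Bernoulli(`p`) variables. -/
def tripleGaussBer (ι : Type*) [Fintype ι] (p : ℝ) :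
    Measure ((ι → ℝ) × (ι → ℝ) × (ι → Bool)) :=
  (gaussianPi ι).prod ((gaussianPi ι).prod (Measure.pi fun _ => berBool p))

/-! ### Spin models on hypergraphs -/

variable {N : ℕ}

/-- `σ_e = ∏_{v ∈ e} σ_v`. -/
def sigEdge (σ : Fin N → Bool) (e : Finset (Fin N)) : ℝ := ∏ v ∈ e, spin (σ v)

/-- Hamiltonian `H_J(σ) = Σ_e ρ_{|e|}(J_e) σ_e` of the short-range model. -/
def ham (Edges : Finset (Finset (Fin N))) (ρ : ℕ → ℝ → ℝ)
    (J : Finset (Fin N) → ℝ) (σ : Fin N → Bool) : ℝ :=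
  ∑ e ∈ Edges, ρ e.card (J e) * sigEdge σ e

/-- Gibbs average of an observable `f` for the Hamiltonian `H` at inverse temperature `β`. -/
def gibbs (β : ℝ) (H : (Fin N → Bool) → ℝ) (f : (Fin N → Bool) → ℝ) : ℝ :=
  (∑ σ : Fin N → Bool, f σ * Real.exp (β * H σ)) / ∑ σ : Fin N → Bool, Real.exp (β * H σ)

/-- Gibbs average of a two-replica observable `f(σ,τ)` where `σ, τ` are sampled from the
product of the Gibbs measures of the Hamiltonians `H₁`, `H₂`. -/
def gibbs2 (β : ℝ) (H₁ H₂ : (Fin N → Bool) → ℝ)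
    (f : (Fin N → Bool) → (Fin N → Bool) → ℝ) : ℝ :=
  (∑ σ : Fin N → Bool, ∑ τ : Fin N → Bool, f σ τ * Real.exp (β * H₁ σ + β * H₂ τ)) /
    ∑ σ : Fin N → Bool, ∑ τ : Fin N → Bool, Real.exp (β * H₁ σ + β * H₂ τ)

/-- Site overlap `R(σ,τ) = N⁻¹ Σ_i σ_i τ_i`. -/
def overlap (σ τ : Fin N → Bool) : ℝ := (∑ i, spin (σ i) * spin (τ i)) / N

/-- Fourier–Hermite coefficient `φ̂_{ij}(n) = E[⟨σ_i σ_j⟩ h_n(J)]` of the two-point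
correlation function. -/
def twoPointCoeff (Edges : Finset (Finset (Fin N))) (ρ : ℕ → ℝ → ℝ) (β : ℝ)
    (i j : Fin N) (n : Finset (Fin N) → ℕ) : ℝ :=
  ∫ ω, gibbs β (ham Edges ρ ω) (fun σ => spin (σ i) * spin (σ j)) * hermiteProd n ω
    ∂gaussianPi (Finset (Fin N))

/-- `E(n) = {e : n_e > 0}`. -/
def Esupp (n : Finset (Fin N) → ℕ) : Finset (Finset (Fin N)) :=
  Finset.univ.filter fun e => n e ≠ 0

/-- `V(n)`: the vertices covered by `E(n)`. -/
def Vsupp (n : Finset (Fin N) → ℕ) : Finset (Fin N) :=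
  (Esupp n).biUnion id

/-- Disorder-averaged two-replica observable under the continuous perturbation:
`E ⟨f(σ,τ)⟩_t` with `σ ~ G_J`, `τ ~ G_{J(t)}`. -/
def contExp (Edges : Finset (Finset (Fin N))) (ρ : ℕ → ℝ → ℝ) (β t : ℝ)
    (f : (Fin N → Bool) → (Fin N → Bool) → ℝ) : ℝ :=
  ∫ ω : (Finset (Fin N) → ℝ) × (Finset (Fin N) → ℝ),
    gibbs2 β (ham Edges ρ ω.1) (ham Edges ρ (contPerturb t ω.1 ω.2)) f
    ∂pairGauss (Finset (Fin N))

/-- Disorder-averaged two-replica observable under the discrete perturbation. -/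
def discExp (Edges : Finset (Finset (Fin N))) (ρ : ℕ → ℝ → ℝ) (β t : ℝ)
    (f : (Fin N → Bool) → (Fin N → Bool) → ℝ) : ℝ :=
  ∫ ω : (Finset (Fin N) → ℝ) × (Finset (Fin N) → ℝ) × (Finset (Fin N) → Bool),
    gibbs2 β (ham Edges ρ ω.1) (ham Edges ρ (discPerturb ω.1 ω.2.1 ω.2.2)) f
    ∂tripleGaussBer (Finset (Fin N)) (Real.exp (-t))

/-! ### Berge paths, distance, balls, cycles -/

/-- `(vs, es)` is a Berge path of length `ℓ` from `v` to `w` in the hypergraph `Edges`. -/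
def IsBergePath (Edges : Finset (Finset (Fin N))) (ℓ : ℕ)
    (vs : Fin (ℓ + 1) → Fin N) (es : Fin ℓ → Finset (Fin N)) (v w : Fin N) : Prop :=
  Function.Injective vs ∧ Function.Injective es ∧ (∀ k, es k ∈ Edges) ∧
    vs 0 = v ∧ vs (Fin.last ℓ) = w ∧
    ∀ k : Fin ℓ, vs k.castSucc ∈ es k ∧ vs k.succ ∈ es k

/-- Hypergraph (Berge) distance between two vertices, `∞` if there is no path. -/
def hdist (Edges : Finset (Finset (Fin N))) (v w : Fin N) : ℕ∞ :=
  sInf {d : ℕ∞ | ∃ (ℓ : ℕ) (vs : Fin (ℓ + 1) → Fin N) (es : Fin ℓ → Finset (Fin N)),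
    IsBergePath Edges ℓ vs es v w ∧ d = (ℓ : ℕ∞)}

open scoped Classical in
/-- The closed ball `B_r(v)` in the hypergraph distance. -/
def hball (Edges : Finset (Finset (Fin N))) (v : Fin N) (r : ℕ) : Finset (Fin N) :=
  Finset.univ.filter fun w => hdist Edges v w ≤ (r : ℕ∞)

/-- The hypergraph `Edges` contains a Berge cycle. -/
def HasBergeCycle (Edges : Finset (Finset (Fin N))) : Prop :=
  ∃ (ℓ : ℕ) (vs : Fin ℓ → Fin N) (es : Fin ℓ → Finset (Fin N)),
    2 ≤ ℓ ∧ Function.Injective vs ∧ Function.Injective es ∧ (∀ k, es k ∈ Edges) ∧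
      ∀ k : Fin ℓ, vs k ∈ es k ∧ vs (finRotate ℓ k) ∈ es k

/-- `min(d, c)` where `d ∈ ℕ∞` and `c ∈ ℝ` (equal to `c` if `d = ∞`). -/
def truncMin (d : ℕ∞) (c : ℝ) : ℝ :=
  if d = ⊤ then c else min (d.toNat : ℝ) c

/-! ### The diluted mixed p-spin random hypergraph -/

/-- Probability that a given hyperedge is present in the diluted model. -/
def edgeProb (α : ℕ → ℝ) (Δ N : ℕ) (e : Finset (Fin N)) : ℝ :=
  if 2 ≤ e.card ∧ e.card ≤ Δ then α e.card * N / (N.choose e.card) else 0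

/-- The law of the diluted mixed `p`-spin random hypergraph: each hyperedge `e` with
`2 ≤ |e| ≤ Δ` is present independently with probability `α_{|e|} N / C(N,|e|)`. -/
def graphMeasure (α : ℕ → ℝ) (Δ N : ℕ) : Measure (Finset (Fin N) → Bool) :=
  Measure.pi fun e => berBool (edgeProb α Δ N e)

/-- The (random) hyperedge set determined by the indicator `g`. -/
def edgesOf {N : ℕ} (Δ : ℕ) (g : Finset (Fin N) → Bool) : Finset (Finset (Fin N)) :=
  Finset.univ.filter fun e => g e = true ∧ 2 ≤ e.card ∧ e.card ≤ Δ

/-- `λ = Σ_p p(p-1) α_p`. -/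
def lamMix (α : ℕ → ℝ) (Δ : ℕ) : ℝ :=
  ∑ p ∈ Finset.Icc 2 Δ, (p : ℝ) * ((p : ℝ) - 1) * α p

/-- `λ' = Σ_p p(p-1)(p-2) α_p`. -/
def lamMix' (α : ℕ → ℝ) (Δ : ℕ) : ℝ :=
  ∑ p ∈ Finset.Icc 2 Δ, (p : ℝ) * ((p : ℝ) - 1) * ((p : ℝ) - 2) * α p

/-- The exploration (breadth-first search) process `(R_t, I_t, S_t, E_t)` of a hypergraph
started at the vertex `i`. -/
def explore {N : ℕ} (Edges : Finset (Finset (Fin N))) (i : Fin N) :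
    ℕ → Finset (Fin N) × Finset (Fin N) × Finset (Fin N) × Finset (Finset (Fin N))
  | 0 => (∅, {i}, Finset.univ.erase i, ∅)
  | t + 1 =>
      let P := explore Edges i t
      let Enew := Edges.filter fun e => (e ∩ P.2.1).Nonempty ∧ e ∩ P.1 = ∅
      (P.1 ∪ P.2.1, Enew.biUnion fun e => e ∩ P.2.2.1,
        P.2.2.1 \ Enew.biUnion fun e => e ∩ P.2.2.1, Enew)

/-- The set `I_t` of newly explored vertices at step `t`. -/
def Iset {N : ℕ} (Edges : Finset (Finset (Fin N))) (i : Fin N) (t : ℕ) : Finset (Fin N) :=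
  (explore Edges i t).2.1

/-- Disorder-and-graph-averaged two-replica observable under the continuous perturbation
in the diluted model. -/
def dilContExp (α : ℕ → ℝ) (Δ N : ℕ) (ρ : ℕ → ℝ → ℝ) (β t : ℝ)
    (f : (Fin N → Bool) → (Fin N → Bool) → ℝ) : ℝ :=
  ∫ ω : (Finset (Fin N) → Bool) × (Finset (Fin N) → ℝ) × (Finset (Fin N) → ℝ),
    gibbs2 β (ham (edgesOf Δ ω.1) ρ ω.2.1)
      (ham (edgesOf Δ ω.1) ρ (contPerturb t ω.2.1 ω.2.2)) f
    ∂((graphMeasure α Δ N).prod (pairGauss (Finset (Fin N))))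

/-- Disorder-and-graph-averaged two-replica observable under the discrete perturbation
in the diluted model. -/
def dilDiscExp (α : ℕ → ℝ) (Δ N : ℕ) (ρ : ℕ → ℝ → ℝ) (β t : ℝ)
    (f : (Fin N → Bool) → (Fin N → Bool) → ℝ) : ℝ :=
  ∫ ω : (Finset (Fin N) → Bool) ×
      (Finset (Fin N) → ℝ) × (Finset (Fin N) → ℝ) × (Finset (Fin N) → Bool),
    gibbs2 β (ham (edgesOf Δ ω.1) ρ ω.2.1)
      (ham (edgesOf Δ ω.1) ρ (discPerturb ω.2.1 ω.2.2.1 ω.2.2.2)) f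
    ∂((graphMeasure α Δ N).prod (tripleGaussBer (Finset (Fin N)) (Real.exp (-t))))

/-! ### The Lévy model -/

/-- Hamiltonian of the Lévy model: `H(σ) = a_N⁻¹ Σ_{i,j} ρ(J_{ij}) σ_i σ_j`. -/
def levyHam (N : ℕ) (aN : ℝ) (ρ : ℝ → ℝ) (J : Fin N × Fin N → ℝ) (σ : Fin N → Bool) : ℝ :=
  (∑ p : Fin N × Fin N, ρ (J p) * (spin (σ p.1) * spin (σ p.2))) / aN

/-- The normalization `a_N = inf{x > 0 : P(|ρ(J)| > x) ≤ 1/N}`. -/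
def levyAN (ρ : ℝ → ℝ) (N : ℕ) : ℝ :=
  sInf {x : ℝ | 0 < x ∧ ((gaussianReal 0 1) {j | x < |ρ j|}).toReal ≤ 1 / N}

/-- The coupled free energy `F_N(t,λ)` of the Lévy model, with the two systems
perturbed by the Ornstein–Uhlenbeck flow at time `t`. -/
def levyF (N : ℕ) (β aN lam : ℝ) (ρ : ℝ → ℝ) (t : ℝ) : ℝ :=
  (∫ ω : (Fin N × Fin N → ℝ) × (Fin N × Fin N → ℝ) × (Fin N × Fin N → ℝ),
      Real.log (∑ σ : Fin N → Bool, ∑ τ : Fin N → Bool,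
        Real.exp (β * levyHam N aN ρ (fun p => Real.exp (-t / 2) * ω.1 p +
              Real.sqrt (1 - Real.exp (-t)) * ω.2.1 p) σ +
          β * levyHam N aN ρ (fun p => Real.exp (-t / 2) * ω.1 p +
              Real.sqrt (1 - Real.exp (-t)) * ω.2.2 p) τ +
          lam * N * overlap σ τ ^ 2))
    ∂tripleGauss (Fin N × Fin N)) / N

/-- The coupled free energy `F_N(∞,λ)`: the two systems carry independent disorders. -/
def levyFinf (N : ℕ) (β aN lam : ℝ) (ρ : ℝ → ℝ) : ℝ :=
  (∫ ω : (Fin N × Fin N → ℝ) × (Fin N × Fin N → ℝ) × (Fin N × Fin N → ℝ),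
      Real.log (∑ σ : Fin N → Bool, ∑ τ : Fin N → Bool,
        Real.exp (β * levyHam N aN ρ ω.2.1 σ + β * levyHam N aN ρ ω.2.2 τ +
          lam * N * overlap σ τ ^ 2))
    ∂tripleGauss (Fin N × Fin N)) / N

/-- `φ(t) = Σ_r E[L_r(J¹(t)) L_r(J²(t))]` where `J^i(t) = e^{-t/2} J + √(1-e^{-t}) J^i`. -/
def phiFn (k m : ℕ) (L : Fin m → (Fin k → ℝ) → ℝ) (t : ℝ) : ℝ :=
  ∑ r : Fin m, ∫ ω : (Fin k → ℝ) × (Fin k → ℝ) × (Fin k → ℝ),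
    L r (fun l => Real.exp (-t / 2) * ω.1 l + Real.sqrt (1 - Real.exp (-t)) * ω.2.1 l) *
      L r (fun l => Real.exp (-t / 2) * ω.1 l + Real.sqrt (1 - Real.exp (-t)) * ω.2.2 l)
    ∂tripleGauss (Fin k)

/-! ### Auxiliary development for Statement 10 -/

section Stmt10Aux

variable {N : ℕ}

/-- Single-coordinate weight for the graph measure. -/
def wSing (α : ℕ → ℝ) (Δ N : ℕ) (e : Finset (Fin N)) (b : Bool) : ℝ :=
  if b then edgeProb α Δ N e else 1 - edgeProb α Δ N e

/-- The probability weight of a point `g` under the graph measure. -/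
def wgt (α : ℕ → ℝ) (Δ N : ℕ) (g : Finset (Fin N) → Bool) : ℝ :=
  ∏ e, wSing α Δ N e (g e)

lemma edgeProb_nonneg (α : ℕ → ℝ) (Δ N : ℕ) (hα : ∀ p, 2 ≤ p → p ≤ Δ → 0 ≤ α p)
    (e : Finset (Fin N)) : 0 ≤ edgeProb α Δ N e := by
  unfold edgeProb
  split
  · next h =>
    exact div_nonneg (mul_nonneg (hα _ h.1 h.2) (Nat.cast_nonneg _)) (Nat.cast_nonneg _)
  · exact le_refl _

lemma card_le_N (e : Finset (Fin N)) : e.card ≤ N := by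
  simpa using e.card_le_univ

lemma edgeProb_le_one (α : ℕ → ℝ) (Δ N : ℕ)
    (hsize : ∀ p, 2 ≤ p → p ≤ Δ → α p * N ≤ (N.choose p : ℝ))
    (e : Finset (Fin N)) : edgeProb α Δ N e ≤ 1 := by
  unfold edgeProb
  split
  · next h =>
    have hpos : 0 < (N.choose e.card : ℝ) := by
      exact_mod_cast Nat.choose_pos (card_le_N e)
    rw [div_le_one hpos]
    exact hsize _ h.1 h.2
  · exact zero_le_one

lemma wSing_nonneg {α : ℕ → ℝ} {Δ N : ℕ} (h0 : ∀ e : Finset (Fin N), 0 ≤ edgeProb α Δ N e)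
    (h1 : ∀ e : Finset (Fin N), edgeProb α Δ N e ≤ 1) (e : Finset (Fin N)) (b : Bool) :
    0 ≤ wSing α Δ N e b := by
  unfold wSing; cases b <;> simp [h0 e, h1 e, sub_nonneg]

lemma wgt_nonneg {α : ℕ → ℝ} {Δ N : ℕ} (h0 : ∀ e : Finset (Fin N), 0 ≤ edgeProb α Δ N e)
    (h1 : ∀ e : Finset (Fin N), edgeProb α Δ N e ≤ 1) (g : Finset (Fin N) → Bool) :
    0 ≤ wgt α Δ N g :=
  Finset.prod_nonneg fun e _ => wSing_nonneg h0 h1 e (g e)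

lemma berBool_singleton (p : ℝ) (b : Bool) :
    berBool p {b} = ENNReal.ofReal (if b then p else 1 - p) := by
  cases b <;>
    simp [berBool, Measure.dirac_apply' _ (MeasurableSet.singleton _), Set.indicator_apply]

lemma berBool_univ (p : ℝ) (h0 : 0 ≤ p) (h1 : p ≤ 1) : berBool p Set.univ = 1 := by
  have : (Set.univ : Set Bool) = {true} ∪ {false} := by
    ext b; cases b <;> simp
  rw [this, measure_union (by simp) (MeasurableSet.singleton _), berBool_singleton,
    berBool_singleton]
  rw [if_pos rfl, if_neg (by simp), ← ENNReal.ofReal_add h0 (by linarith)]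
  norm_num

lemma berBool_isProb (p : ℝ) (h0 : 0 ≤ p) (h1 : p ≤ 1) : IsProbabilityMeasure (berBool p) :=
  ⟨berBool_univ p h0 h1⟩

lemma graphMeasure_singleton (α : ℕ → ℝ) (Δ N : ℕ) (g : Finset (Fin N) → Bool) :
    graphMeasure α Δ N {g} = ∏ e, ENNReal.ofReal (wSing α Δ N e (g e)) := by
  rw [graphMeasure, ← Set.univ_pi_singleton g, Measure.pi_pi]
  exact Finset.prod_congr rfl fun e _ => berBool_singleton _ _

lemma graphMeasure_isProb (α : ℕ → ℝ) (Δ N : ℕ)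
    (h0 : ∀ e : Finset (Fin N), 0 ≤ edgeProb α Δ N e)
    (h1 : ∀ e : Finset (Fin N), edgeProb α Δ N e ≤ 1) :
    IsProbabilityMeasure (graphMeasure α Δ N) := by
  haveI : ∀ e : Finset (Fin N), IsProbabilityMeasure (berBool (edgeProb α Δ N e)) :=
    fun e => berBool_isProb _ (h0 e) (h1 e)
  unfold graphMeasure; infer_instance

lemma integral_graphMeasure (α : ℕ → ℝ) (Δ N : ℕ)
    (h0 : ∀ e : Finset (Fin N), 0 ≤ edgeProb α Δ N e)
    (h1 : ∀ e : Finset (Fin N), edgeProb α Δ N e ≤ 1)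
    (f : (Finset (Fin N) → Bool) → ℝ) :
    ∫ g, f g ∂graphMeasure α Δ N = ∑ g, wgt α Δ N g * f g := by
  haveI := graphMeasure_isProb α Δ N h0 h1
  rw [integral_fintype (Integrable.of_finite)]
  refine Finset.sum_congr rfl fun g _ => ?_
  rw [measureReal_def, graphMeasure_singleton, ENNReal.toReal_prod, smul_eq_mul]
  congr 1
  exact Finset.prod_congr rfl fun e _ => ENNReal.toReal_ofReal (wSing_nonneg h0 h1 e (g e))

lemma sum_wgt_one (α : ℕ → ℝ) (Δ N : ℕ)
    (h0 : ∀ e : Finset (Fin N), 0 ≤ edgeProb α Δ N e)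
    (h1 : ∀ e : Finset (Fin N), edgeProb α Δ N e ≤ 1) :
    ∑ g : Finset (Fin N) → Bool, wgt α Δ N g = 1 := by
  haveI := graphMeasure_isProb α Δ N h0 h1
  have := integral_graphMeasure α Δ N h0 h1 (fun _ => (1 : ℝ))
  simpa using this.symm


section Stmt10Aux2

variable {N : ℕ}

lemma sum_split_coord (e : Finset (Fin N)) (H : (Finset (Fin N) → Bool) → ℝ) :
    ∑ g : Finset (Fin N) → Bool, H g =
      ∑ g ∈ Finset.univ.filter fun g : Finset (Fin N) → Bool => g e = true,
        (H g + H (Function.update g e false)) := by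
  classical
  rw [Finset.sum_add_distrib,
    ← Finset.sum_filter_add_sum_filter_not Finset.univ
      (fun g : Finset (Fin N) → Bool => g e = true) H]
  congr 1
  refine Finset.sum_nbij' (fun g => Function.update g e true)
    (fun g => Function.update g e false) ?_ ?_ ?_ ?_ ?_
  · intro a ha; simp
  · intro a ha; simp
  · intro a ha
    have hae : a e = false := by simpa using (Finset.mem_filter.mp ha).2
    show Function.update (Function.update a e true) e false = a
    rw [Function.update_idem, ← hae, Function.update_eq_self]
  · intro a ha
    have hae : a e = true := by simpa using (Finset.mem_filter.mp ha).2
    show Function.update (Function.update a e false) e true = a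
    rw [Function.update_idem, ← hae, Function.update_eq_self]
  · intro a ha
    have hae : a e = false := by simpa using (Finset.mem_filter.mp ha).2
    show H a = H (Function.update (Function.update a e true) e false)
    rw [Function.update_idem, ← hae, Function.update_eq_self]

lemma sum_factor_coord (α : ℕ → ℝ) (Δ : ℕ) (e : Finset (Fin N))
    (G : (Finset (Fin N) → Bool) → ℝ)
    (hG : ∀ g b, G (Function.update g e b) = G g) :
    ∑ g : Finset (Fin N) → Bool, wgt α Δ N g * (G g * (if g e then (1 : ℝ) else 0)) =
      edgeProb α Δ N e * ∑ g : Finset (Fin N) → Bool, wgt α Δ N g * G g := by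
  classical
  rw [sum_split_coord e, sum_split_coord e (fun g => wgt α Δ N g * G g), Finset.mul_sum]
  refine Finset.sum_congr rfl fun g hg => ?_
  have hge : g e = true := by simpa using (Finset.mem_filter.mp hg).2
  have hup : Function.update g e false e = false := by simp
  have hGf : G (Function.update g e false) = G g := hG g false
  have key : ∀ b, wgt α Δ N (Function.update g e b) =
      wSing α Δ N e b * ∏ f ∈ Finset.univ.erase e, wSing α Δ N f (g f) := by
    intro b
    rw [wgt, ← Finset.mul_prod_erase Finset.univ _ (Finset.mem_univ e)]
    simp only [Function.update_self]
    congr 1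
    exact Finset.prod_congr rfl fun f hf =>
      by rw [Function.update_of_ne (Finset.ne_of_mem_erase hf)]
  have hgup : Function.update g e true = g := by
    conv_lhs => rw [← hge]
    exact Function.update_eq_self e g
  have e1 : wgt α Δ N g =
      wSing α Δ N e true * ∏ f ∈ Finset.univ.erase e, wSing α Δ N f (g f) := by
    have := key true; rwa [hgup] at this
  have e2 : wgt α Δ N (Function.update g e false) =
      wSing α Δ N e false * ∏ f ∈ Finset.univ.erase e, wSing α Δ N f (g f) := key false
  rw [hge, hup, hGf, e1, e2]
  simp only [wSing, if_true, Bool.false_eq_true, if_false]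
  ring

lemma explore_succ (E : Finset (Finset (Fin N))) (i : Fin N) (t : ℕ) :
    explore E i (t + 1) =
      ((explore E i t).1 ∪ (explore E i t).2.1,
       (E.filter fun e => (e ∩ (explore E i t).2.1).Nonempty ∧
          e ∩ (explore E i t).1 = ∅).biUnion (fun e => e ∩ (explore E i t).2.2.1),
       (explore E i t).2.2.1 \
         (E.filter fun e => (e ∩ (explore E i t).2.1).Nonempty ∧
            e ∩ (explore E i t).1 = ∅).biUnion (fun e => e ∩ (explore E i t).2.2.1),
       E.filter fun e => (e ∩ (explore E i t).2.1).Nonempty ∧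
         e ∩ (explore E i t).1 = ∅) := rfl

lemma explore_I_inter_S (E : Finset (Finset (Fin N))) (i : Fin N) (t : ℕ) :
    (explore E i t).2.1 ∩ (explore E i t).2.2.1 = ∅ := by
  cases t with
  | zero =>
    show ({i} : Finset (Fin N)) ∩ Finset.univ.erase i = ∅
    ext v; by_cases h : v = i <;> simp [h]
  | succ t =>
    rw [explore_succ]
    exact Finset.inter_sdiff_self _ _

lemma explore_det (Δ : ℕ) (i : Fin N) (g g' : Finset (Fin N) → Bool) :
    ∀ t : ℕ, (∀ f : Finset (Fin N),
        (f ∩ (explore (edgesOf Δ g) i t).1).Nonempty → g f = g' f) →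
      explore (edgesOf Δ g) i t = explore (edgesOf Δ g') i t := by
  intro t
  induction t with
  | zero => intro _; rfl
  | succ t ih =>
    intro h
    have hmem : ∀ f : Finset (Fin N), (f ∩ (explore (edgesOf Δ g) i t).2.1).Nonempty →
        (f ∩ (explore (edgesOf Δ g) i (t + 1)).1).Nonempty := by
      intro f hf
      rw [explore_succ]
      exact hf.mono (Finset.inter_subset_inter le_rfl Finset.subset_union_right)
    have ht : explore (edgesOf Δ g) i t = explore (edgesOf Δ g') i t := by
      refine ih fun f hf => h f ?_
      rw [explore_succ]
      exact hf.mono (Finset.inter_subset_inter le_rfl Finset.subset_union_left)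
    have hE : ((edgesOf Δ g).filter fun e => (e ∩ (explore (edgesOf Δ g) i t).2.1).Nonempty ∧
          e ∩ (explore (edgesOf Δ g) i t).1 = ∅)
        = ((edgesOf Δ g').filter fun e => (e ∩ (explore (edgesOf Δ g) i t).2.1).Nonempty ∧
          e ∩ (explore (edgesOf Δ g) i t).1 = ∅) := by
      ext e
      simp only [Finset.mem_filter, Finset.mem_univ, true_and]
      simp only [Finset.mem_filter, edgesOf, Finset.mem_univ, true_and]
      constructor
      · rintro ⟨⟨hge, hc⟩, hne, hre⟩
        exact ⟨⟨(h e (hmem e hne)) ▸ hge, hc⟩, hne, hre⟩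
      · rintro ⟨⟨hge, hc⟩, hne, hre⟩
        exact ⟨⟨(h e (hmem e hne)).symm ▸ hge, hc⟩, hne, hre⟩
    rw [explore_succ, explore_succ, ← ht, hE]
lemma explore_eq_update_iff (Δ : ℕ) (i : Fin N) (t : ℕ)
    (c : Finset (Fin N) × Finset (Fin N) × Finset (Fin N) × Finset (Finset (Fin N)))
    (e : Finset (Fin N)) (he : e ∩ c.1 = ∅) (g : Finset (Fin N) → Bool) (b : Bool) :
    explore (edgesOf Δ (Function.update g e b)) i t = c ↔
      explore (edgesOf Δ g) i t = c := by
  have key : ∀ (g : Finset (Fin N) → Bool) (b : Bool), explore (edgesOf Δ g) i t = c →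
      explore (edgesOf Δ (Function.update g e b)) i t = c := by
    intro g b hc
    have hdet : explore (edgesOf Δ g) i t = explore (edgesOf Δ (Function.update g e b)) i t := by
      refine explore_det Δ i g (Function.update g e b) t fun f hf => ?_
      rw [hc] at hf
      have hfe : f ≠ e := by
        rintro rfl
        rw [he] at hf
        exact Finset.not_nonempty_empty hf
      exact (Function.update_of_ne hfe b g).symm
    exact hdet.symm.trans hc
  constructor
  · intro hc
    have h2 := key (Function.update g e b) (g e) hc
    rwa [Function.update_idem, Function.update_eq_self] at h2
  · exact key g b

lemma choose_ratio (α : ℕ → ℝ) (N p : ℕ) (hN : 1 ≤ N) (hp : 1 ≤ p) (hα : 0 ≤ α p) :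
    ((N - 1).choose (p - 1) : ℝ) * (α p * N / (N.choose p : ℝ)) ≤ p * α p := by
  by_cases hpN : p ≤ N
  · have hid : N * (N - 1).choose (p - 1) = N.choose p * p := by
      have h := Nat.add_one_mul_choose_eq (N - 1) (p - 1)
      have hN' : N - 1 + 1 = N := by omega
      have hp' : p - 1 + 1 = p := by omega
      rw [hN', hp'] at h
      exact h
    have hch : (0 : ℝ) < (N.choose p : ℝ) := by exact_mod_cast Nat.choose_pos hpN
    have hidR : (N : ℝ) * ((N - 1).choose (p - 1) : ℝ) = (N.choose p : ℝ) * p := by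
      exact_mod_cast hid
    refine le_of_eq ?_
    field_simp
    linear_combination α p * hidR
  · have h0 : (N - 1).choose (p - 1) = 0 := Nat.choose_eq_zero_of_lt (by omega)
    rw [h0]
    simp only [Nat.cast_zero, zero_mul]
    positivity

lemma card_edges_through (v : Fin N) (p : ℕ) :
    ((Finset.univ.filter fun e : Finset (Fin N) => v ∈ e ∧ e.card = p).card : ℕ)
      ≤ (N - 1).choose (p - 1) := by
  classical
  have hmaps : ∀ e ∈ Finset.univ.filter fun e : Finset (Fin N) => v ∈ e ∧ e.card = p,
      e.erase v ∈ Finset.powersetCard (p - 1) (Finset.univ.erase v) := by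
    intro e he
    obtain ⟨hv, hc⟩ : v ∈ e ∧ e.card = p := by simpa using he
    rw [Finset.mem_powersetCard]
    exact ⟨Finset.erase_subset_erase v (Finset.subset_univ e),
      by rw [Finset.card_erase_of_mem hv, hc]⟩
  have hinj : Set.InjOn (fun e : Finset (Fin N) => e.erase v)
      ((Finset.univ.filter fun e : Finset (Fin N) => v ∈ e ∧ e.card = p) : Set _) := by
    intro e1 h1 e2 h2 h
    simp only [Finset.coe_filter, Set.mem_setOf_eq] at h1 h2
    simp only at h
    rw [← Finset.insert_erase h1.2.1, ← Finset.insert_erase h2.2.1, h]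
  have := Finset.card_le_card_of_injOn _ hmaps hinj
  rwa [Finset.card_powersetCard, Finset.card_erase_of_mem (Finset.mem_univ v),
    Finset.card_univ, Fintype.card_fin] at this

lemma count_bound (α : ℕ → ℝ) (Δ : ℕ) (hN : 1 ≤ N)
    (hα : ∀ p, 2 ≤ p → p ≤ Δ → 0 ≤ α p) (m : ℕ)
    (I R S : Finset (Fin N)) (hIS : I ∩ S = ∅) :
    ∑ e ∈ Finset.univ.filter (fun e : Finset (Fin N) => (e ∩ I).Nonempty ∧ e ∩ R = ∅),
        edgeProb α Δ N e * ((e ∩ S).card : ℝ) ^ m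
      ≤ (∑ p ∈ Finset.Icc 2 Δ, (p : ℝ) * ((p : ℝ) - 1) ^ m * α p) * I.card := by
  classical
  set F : Finset (Fin N) → ℝ := fun e => edgeProb α Δ N e * ((e.card : ℝ) - 1) ^ m with hF
  have hα' : ∀ e : Finset (Fin N), 0 ≤ edgeProb α Δ N e :=
    fun e => edgeProb_nonneg α Δ N hα e
  have hFnn : ∀ e : Finset (Fin N), 0 ≤ F e := by
    intro e
    by_cases h : 2 ≤ e.card ∧ e.card ≤ Δ
    · refine mul_nonneg (hα' e) (pow_nonneg ?_ m)
      have : (2 : ℝ) ≤ (e.card : ℝ) := by exact_mod_cast h.1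
      linarith
    · have h0 : edgeProb α Δ N e = 0 := by unfold edgeProb; rw [if_neg h]
      simp only [hF, h0, zero_mul]
      exact le_refl _
  have step1 : ∑ e ∈ Finset.univ.filter
        (fun e : Finset (Fin N) => (e ∩ I).Nonempty ∧ e ∩ R = ∅),
        edgeProb α Δ N e * ((e ∩ S).card : ℝ) ^ m
      ≤ ∑ e ∈ Finset.univ.filter
        (fun e : Finset (Fin N) => (e ∩ I).Nonempty ∧ e ∩ R = ∅),
        ((e ∩ I).card : ℝ) * F e := by
    refine Finset.sum_le_sum fun e he => ?_
    obtain ⟨hne, -⟩ : (e ∩ I).Nonempty ∧ e ∩ R = ∅ := by simpa using he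
    obtain ⟨v, hv⟩ := hne
    have hvE : v ∈ e := (Finset.mem_inter.mp hv).1
    have hvI : v ∈ I := (Finset.mem_inter.mp hv).2
    have hvS : v ∉ S := by
      intro hvS
      have : v ∈ I ∩ S := Finset.mem_inter.mpr ⟨hvI, hvS⟩
      rw [hIS] at this
      exact absurd this (Finset.notMem_empty v)
    have hsub : e ∩ S ⊆ e.erase v := by
      intro w hw
      obtain ⟨hwe, hwS⟩ := Finset.mem_inter.mp hw
      exact Finset.mem_erase.mpr ⟨fun hwv => hvS (hwv ▸ hwS), hwe⟩
    have hcard : ((e ∩ S).card : ℝ) ≤ (e.card : ℝ) - 1 := by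
      have h1 : (e ∩ S).card ≤ e.card - 1 := by
        have := Finset.card_le_card hsub
        rwa [Finset.card_erase_of_mem hvE] at this
      have h2 : 1 ≤ e.card := Finset.card_pos.mpr ⟨v, hvE⟩
      have h3 := (Nat.cast_le (α := ℝ)).mpr h1
      rwa [Nat.cast_sub h2, Nat.cast_one] at h3
    have hpow : ((e ∩ S).card : ℝ) ^ m ≤ ((e.card : ℝ) - 1) ^ m :=
      pow_le_pow_left₀ (Nat.cast_nonneg _) hcard m
    have hFle : edgeProb α Δ N e * ((e ∩ S).card : ℝ) ^ m ≤ F e :=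
      mul_le_mul_of_nonneg_left hpow (hα' e)
    refine hFle.trans ?_
    have h1I : (1 : ℝ) ≤ ((e ∩ I).card : ℝ) := by
      exact_mod_cast Finset.card_pos.mpr ⟨v, hv⟩
    exact le_mul_of_one_le_left (hFnn e) h1I
  have step2 : ∑ e ∈ Finset.univ.filter
        (fun e : Finset (Fin N) => (e ∩ I).Nonempty ∧ e ∩ R = ∅),
        ((e ∩ I).card : ℝ) * F e
      = ∑ v ∈ I, ∑ e ∈ Finset.univ.filter
          (fun e : Finset (Fin N) => (e ∩ I).Nonempty ∧ e ∩ R = ∅),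
          (if v ∈ e then F e else 0) := by
    rw [Finset.sum_comm]
    refine Finset.sum_congr rfl fun e _ => ?_
    rw [Finset.sum_ite_mem, Finset.sum_const, Finset.inter_comm I e, nsmul_eq_mul]
  have inner : ∀ v : Fin N,
      ∑ e ∈ Finset.univ.filter
          (fun e : Finset (Fin N) => (e ∩ I).Nonempty ∧ e ∩ R = ∅),
          (if v ∈ e then F e else 0)
        ≤ ∑ p ∈ Finset.Icc 2 Δ, (p : ℝ) * ((p : ℝ) - 1) ^ m * α p := by
    intro v
    have h1 : ∑ e ∈ Finset.univ.filter
          (fun e : Finset (Fin N) => (e ∩ I).Nonempty ∧ e ∩ R = ∅),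
          (if v ∈ e then F e else 0)
        ≤ ∑ e : Finset (Fin N), (if v ∈ e then F e else 0) := by
      refine Finset.sum_le_sum_of_subset_of_nonneg (Finset.filter_subset _ _)
        fun e _ _ => ?_
      split
      · exact hFnn e
      · exact le_refl _
    refine h1.trans ?_
    rw [← Finset.sum_filter]
    have heq : ∑ e ∈ Finset.univ.filter (fun e : Finset (Fin N) => v ∈ e), F e
        = ∑ e ∈ Finset.univ.filter
            (fun e : Finset (Fin N) => v ∈ e ∧ 2 ≤ e.card ∧ e.card ≤ Δ), F e := by
      refine (Finset.sum_subset ?_ ?_).symm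
      · intro e he
        simp only [Finset.mem_filter, Finset.mem_univ, true_and] at he ⊢
        exact he.1
      · intro e he hne
        simp only [Finset.mem_filter, Finset.mem_univ, true_and] at he hne
        have hnot : ¬(2 ≤ e.card ∧ e.card ≤ Δ) := by tauto
        have h0 : edgeProb α Δ N e = 0 := by unfold edgeProb; rw [if_neg hnot]
        simp [hF, h0]
    rw [heq]
    rw [← Finset.sum_fiberwise_of_maps_to (g := Finset.card) (t := Finset.Icc 2 Δ)
      (fun e he => by
        simp only [Finset.mem_filter] at he
        exact Finset.mem_Icc.mpr ⟨he.2.2.1, he.2.2.2⟩) F]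
    refine Finset.sum_le_sum fun p hp => ?_
    obtain ⟨hp2, hpΔ⟩ := Finset.mem_Icc.mp hp
    have hp2R : (2 : ℝ) ≤ (p : ℝ) := by exact_mod_cast hp2
    have hαp : 0 ≤ α p := hα p hp2 hpΔ
    have hconst : ∀ e ∈ (Finset.univ.filter
          (fun e : Finset (Fin N) => v ∈ e ∧ 2 ≤ e.card ∧ e.card ≤ Δ)).filter
          (fun e => e.card = p),
        F e = (α p * N / (N.choose p : ℝ)) * ((p : ℝ) - 1) ^ m := by
      intro e he
      simp only [Finset.mem_filter, Finset.mem_univ, true_and] at he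
      obtain ⟨⟨hv, h2, hΔ'⟩, hcp⟩ := he
      have hep : edgeProb α Δ N e = α p * N / (N.choose p : ℝ) := by
        unfold edgeProb
        rw [hcp, if_pos ⟨hp2, hpΔ⟩]
      simp only [hF, hep, hcp]
    rw [Finset.sum_congr rfl hconst, Finset.sum_const, nsmul_eq_mul]
    have hcard2 : ((Finset.univ.filter
          (fun e : Finset (Fin N) => v ∈ e ∧ 2 ≤ e.card ∧ e.card ≤ Δ)).filter
          (fun e => e.card = p)).card ≤ (N - 1).choose (p - 1) := by
      refine le_trans (Finset.card_le_card ?_) (card_edges_through v p)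
      intro e he
      simp only [Finset.mem_filter, Finset.mem_univ, true_and] at he ⊢
      exact ⟨he.1.1, he.2⟩
    have hcp_nn : (0 : ℝ) ≤ (α p * N / (N.choose p : ℝ)) * ((p : ℝ) - 1) ^ m := by
      refine mul_nonneg (div_nonneg (mul_nonneg hαp (Nat.cast_nonneg _)) (Nat.cast_nonneg _))
        (pow_nonneg (by linarith) m)
    calc (((Finset.univ.filter
          (fun e : Finset (Fin N) => v ∈ e ∧ 2 ≤ e.card ∧ e.card ≤ Δ)).filter
          (fun e => e.card = p)).card : ℝ) * ((α p * N / (N.choose p : ℝ)) * ((p : ℝ) - 1) ^ m)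
        ≤ ((N - 1).choose (p - 1) : ℝ) * ((α p * N / (N.choose p : ℝ)) * ((p : ℝ) - 1) ^ m) := by
          exact mul_le_mul_of_nonneg_right (by exact_mod_cast hcard2) hcp_nn
      _ = (((N - 1).choose (p - 1) : ℝ) * (α p * N / (N.choose p : ℝ))) * ((p : ℝ) - 1) ^ m := by
          ring
      _ ≤ ((p : ℝ) * α p) * ((p : ℝ) - 1) ^ m := by
          exact mul_le_mul_of_nonneg_right (choose_ratio α N p hN (by omega) hαp)
            (pow_nonneg (by linarith) m)
      _ = (p : ℝ) * ((p : ℝ) - 1) ^ m * α p := by ring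
  calc ∑ e ∈ Finset.univ.filter
        (fun e : Finset (Fin N) => (e ∩ I).Nonempty ∧ e ∩ R = ∅),
        edgeProb α Δ N e * ((e ∩ S).card : ℝ) ^ m
      ≤ ∑ e ∈ Finset.univ.filter
        (fun e : Finset (Fin N) => (e ∩ I).Nonempty ∧ e ∩ R = ∅),
        ((e ∩ I).card : ℝ) * F e := step1
    _ = ∑ v ∈ I, ∑ e ∈ Finset.univ.filter
          (fun e : Finset (Fin N) => (e ∩ I).Nonempty ∧ e ∩ R = ∅),
          (if v ∈ e then F e else 0) := step2
    _ ≤ ∑ _v ∈ I, ∑ p ∈ Finset.Icc 2 Δ, (p : ℝ) * ((p : ℝ) - 1) ^ m * α p :=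
        Finset.sum_le_sum fun v _ => inner v
    _ = (∑ p ∈ Finset.Icc 2 Δ, (p : ℝ) * ((p : ℝ) - 1) ^ m * α p) * I.card := by
        rw [Finset.sum_const, nsmul_eq_mul, mul_comm]
/-- Indicator that the exploration process at time `t` equals `c`. -/
noncomputable def Gind (Δ : ℕ) (i : Fin N) (t : ℕ)
    (c : Finset (Fin N) × Finset (Fin N) × Finset (Fin N) × Finset (Finset (Fin N)))
    (g : Finset (Fin N) → Bool) : ℝ :=
  if explore (edgesOf Δ g) i t = c then 1 else 0

lemma Gind_nonneg (Δ : ℕ) (i : Fin N) (t : ℕ) (c) (g) : 0 ≤ Gind (N := N) Δ i t c g := by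
  unfold Gind; split <;> norm_num

lemma Gind_update (Δ : ℕ) (i : Fin N) (t : ℕ)
    (c : Finset (Fin N) × Finset (Fin N) × Finset (Fin N) × Finset (Finset (Fin N)))
    (e : Finset (Fin N)) (he : e ∩ c.1 = ∅) (g : Finset (Fin N) → Bool) (b : Bool) :
    Gind Δ i t c (Function.update g e b) = Gind Δ i t c g := by
  unfold Gind
  by_cases h : explore (edgesOf Δ g) i t = c
  · rw [if_pos h, if_pos ((explore_eq_update_iff Δ i t c e he g b).mpr h)]
  · rw [if_neg h, if_neg (fun hc => h ((explore_eq_update_iff Δ i t c e he g b).mp hc))]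

lemma sum_decomp (α : ℕ → ℝ) (Δ : ℕ) (i : Fin N) (t : ℕ)
    (X : (Finset (Fin N) → Bool) → ℝ) :
    ∑ g : Finset (Fin N) → Bool, wgt α Δ N g * X g =
      ∑ c : Finset (Fin N) × Finset (Fin N) × Finset (Fin N) × Finset (Finset (Fin N)),
        ∑ g : Finset (Fin N) → Bool, wgt α Δ N g * (Gind Δ i t c g * X g) := by
  classical
  rw [Finset.sum_comm]
  refine Finset.sum_congr rfl fun g _ => ?_
  unfold Gind
  simp only [ite_mul, one_mul, zero_mul, mul_ite, mul_zero]
  rw [Finset.sum_ite_eq Finset.univ (explore (edgesOf Δ g) i t)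
    (fun _ => wgt α Δ N g * X g)]
  simp

lemma sum_fiber_eval (α : ℕ → ℝ) (Δ : ℕ) (i : Fin N) (t : ℕ)
    (φ : Finset (Fin N) × Finset (Fin N) × Finset (Fin N) × Finset (Finset (Fin N)) → ℝ) :
    ∑ c : Finset (Fin N) × Finset (Fin N) × Finset (Fin N) × Finset (Finset (Fin N)),
        φ c * ∑ g : Finset (Fin N) → Bool, wgt α Δ N g * Gind Δ i t c g =
      ∑ g : Finset (Fin N) → Bool, wgt α Δ N g * φ (explore (edgesOf Δ g) i t) := by
  classical
  have : ∀ c, φ c * ∑ g : Finset (Fin N) → Bool, wgt α Δ N g * Gind Δ i t c g =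
      ∑ g : Finset (Fin N) → Bool, φ c * (wgt α Δ N g * Gind Δ i t c g) :=
    fun c => Finset.mul_sum _ _ _
  simp only [this]
  rw [Finset.sum_comm]
  refine Finset.sum_congr rfl fun g _ => ?_
  unfold Gind
  simp only [mul_ite, mul_one, mul_zero]
  rw [Finset.sum_ite_eq Finset.univ (explore (edgesOf Δ g) i t)
    (fun c => φ c * wgt α Δ N g)]
  simp [mul_comm]

lemma rec_per_fiber_one (α : ℕ → ℝ) (Δ : ℕ) (hN : 1 ≤ N)
    (h0 : ∀ e : Finset (Fin N), 0 ≤ edgeProb α Δ N e)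
    (h1 : ∀ e : Finset (Fin N), edgeProb α Δ N e ≤ 1)
    (hα : ∀ p, 2 ≤ p → p ≤ Δ → 0 ≤ α p)
    (i : Fin N) (t : ℕ)
    (c : Finset (Fin N) × Finset (Fin N) × Finset (Fin N) × Finset (Finset (Fin N))) :
    ∑ g : Finset (Fin N) → Bool,
        wgt α Δ N g * (Gind Δ i t c g * ((Iset (edgesOf Δ g) i (t + 1)).card : ℝ)) ≤
      (lamMix α Δ * (c.2.1.card : ℝ)) *
        ∑ g : Finset (Fin N) → Bool, wgt α Δ N g * Gind Δ i t c g := by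
  classical
  by_cases hre : ∃ g0 : Finset (Fin N) → Bool, explore (edgesOf Δ g0) i t = c
  swap
  · have hz : ∀ g : Finset (Fin N) → Bool, Gind Δ i t c g = 0 := by
      intro g; unfold Gind; rw [if_neg (fun h => hre ⟨g, h⟩)]
    simp [hz]
  obtain ⟨g0, hg0⟩ := hre
  have hIS : c.2.1 ∩ c.2.2.1 = ∅ := by
    rw [← hg0]; exact explore_I_inter_S _ i t
  set A : Finset (Finset (Fin N)) := Finset.univ.filter
    (fun e : Finset (Fin N) => (e ∩ c.2.1).Nonempty ∧ e ∩ c.1 = ∅) with hA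
  have hwnn : ∀ g : Finset (Fin N) → Bool, 0 ≤ wgt α Δ N g := fun g => wgt_nonneg h0 h1 g
  -- pointwise bound
  have hpt : ∀ g : Finset (Fin N) → Bool,
      wgt α Δ N g * (Gind Δ i t c g * ((Iset (edgesOf Δ g) i (t + 1)).card : ℝ)) ≤
      ∑ e ∈ A, ((e ∩ c.2.2.1).card : ℝ) *
        (wgt α Δ N g * (Gind Δ i t c g * (if g e then (1 : ℝ) else 0))) := by
    intro g
    by_cases hTg : explore (edgesOf Δ g) i t = c
    · have hG1 : Gind Δ i t c g = 1 := by unfold Gind; rw [if_pos hTg]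
      have hI1 : Iset (edgesOf Δ g) i (t + 1) =
          ((edgesOf Δ g).filter fun e => (e ∩ c.2.1).Nonempty ∧ e ∩ c.1 = ∅).biUnion
            (fun e => e ∩ c.2.2.1) := by
        rw [Iset, explore_succ, hTg]
      have hcard : ((Iset (edgesOf Δ g) i (t + 1)).card : ℝ) ≤
          ∑ e ∈ A, ((e ∩ c.2.2.1).card : ℝ) * (if g e then (1 : ℝ) else 0) := by
        have hle2 : (Iset (edgesOf Δ g) i (t + 1)).card ≤
            ∑ e ∈ (edgesOf Δ g).filter
              (fun e => (e ∩ c.2.1).Nonempty ∧ e ∩ c.1 = ∅), (e ∩ c.2.2.1).card := by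
          rw [hI1]; exact Finset.card_biUnion_le
        have hle3 : ∑ e ∈ (edgesOf Δ g).filter
              (fun e => (e ∩ c.2.1).Nonempty ∧ e ∩ c.1 = ∅), ((e ∩ c.2.2.1).card : ℝ) ≤
            ∑ e ∈ A.filter (fun e => g e = true), ((e ∩ c.2.2.1).card : ℝ) := by
          refine Finset.sum_le_sum_of_subset_of_nonneg ?_ (fun _ _ _ => Nat.cast_nonneg _)
          intro e he
          simp only [edgesOf, hA, Finset.mem_filter, Finset.mem_univ, true_and] at he ⊢
          exact ⟨⟨he.2.1, he.2.2⟩, he.1.1⟩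
        have hle4 : ∑ e ∈ A.filter (fun e => g e = true), ((e ∩ c.2.2.1).card : ℝ) =
            ∑ e ∈ A, ((e ∩ c.2.2.1).card : ℝ) * (if g e then (1 : ℝ) else 0) := by
          rw [Finset.sum_filter]
          refine Finset.sum_congr rfl fun e _ => ?_
          by_cases hge : g e = true <;> simp [hge]
        calc ((Iset (edgesOf Δ g) i (t + 1)).card : ℝ)
            ≤ ∑ e ∈ (edgesOf Δ g).filter
                (fun e => (e ∩ c.2.1).Nonempty ∧ e ∩ c.1 = ∅), ((e ∩ c.2.2.1).card : ℝ) := by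
              exact_mod_cast hle2
          _ ≤ _ := hle3
          _ = _ := hle4
      calc wgt α Δ N g * (Gind Δ i t c g * ((Iset (edgesOf Δ g) i (t + 1)).card : ℝ))
          ≤ wgt α Δ N g * (Gind Δ i t c g *
              ∑ e ∈ A, ((e ∩ c.2.2.1).card : ℝ) * (if g e then (1 : ℝ) else 0)) := by
            rw [hG1]
            simp only [one_mul]
            exact mul_le_mul_of_nonneg_left hcard (hwnn g)
        _ = ∑ e ∈ A, ((e ∩ c.2.2.1).card : ℝ) *
              (wgt α Δ N g * (Gind Δ i t c g * (if g e then (1 : ℝ) else 0))) := by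
            rw [Finset.mul_sum, Finset.mul_sum]
            exact Finset.sum_congr rfl fun e _ => by ring
    · have hG0 : Gind Δ i t c g = 0 := by unfold Gind; rw [if_neg hTg]
      simp [hG0]
  have hsum : ∑ g : Finset (Fin N) → Bool,
      wgt α Δ N g * (Gind Δ i t c g * ((Iset (edgesOf Δ g) i (t + 1)).card : ℝ)) ≤
      ∑ e ∈ A, ((e ∩ c.2.2.1).card : ℝ) *
        (edgeProb α Δ N e * ∑ g : Finset (Fin N) → Bool, wgt α Δ N g * Gind Δ i t c g) := by
    calc ∑ g : Finset (Fin N) → Bool,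
        wgt α Δ N g * (Gind Δ i t c g * ((Iset (edgesOf Δ g) i (t + 1)).card : ℝ))
        ≤ ∑ g : Finset (Fin N) → Bool, ∑ e ∈ A, ((e ∩ c.2.2.1).card : ℝ) *
            (wgt α Δ N g * (Gind Δ i t c g * (if g e then (1 : ℝ) else 0))) :=
          Finset.sum_le_sum fun g _ => hpt g
      _ = ∑ e ∈ A, ∑ g : Finset (Fin N) → Bool, ((e ∩ c.2.2.1).card : ℝ) *
            (wgt α Δ N g * (Gind Δ i t c g * (if g e then (1 : ℝ) else 0))) :=
          Finset.sum_comm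
      _ = ∑ e ∈ A, ((e ∩ c.2.2.1).card : ℝ) *
            (edgeProb α Δ N e * ∑ g : Finset (Fin N) → Bool,
              wgt α Δ N g * Gind Δ i t c g) := by
          refine Finset.sum_congr rfl fun e he => ?_
          rw [← Finset.mul_sum]
          congr 1
          refine sum_factor_coord α Δ e (Gind Δ i t c) fun g b => ?_
          have heA : (e ∩ c.2.1).Nonempty ∧ e ∩ c.1 = ∅ := by
            simpa [hA] using he
          exact Gind_update Δ i t c e heA.2 g b
  refine hsum.trans ?_
  have hPnn : 0 ≤ ∑ g : Finset (Fin N) → Bool, wgt α Δ N g * Gind Δ i t c g :=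
    Finset.sum_nonneg fun g _ => mul_nonneg (hwnn g) (Gind_nonneg Δ i t c g)
  have hcount : ∑ e ∈ A, edgeProb α Δ N e * ((e ∩ c.2.2.1).card : ℝ) ≤
      lamMix α Δ * (c.2.1.card : ℝ) := by
    have := count_bound α Δ hN hα 1 c.2.1 c.1 c.2.2.1 hIS
    simp only [pow_one] at this
    rw [hA]
    refine this.trans (le_of_eq ?_)
    rw [lamMix]
  calc ∑ e ∈ A, ((e ∩ c.2.2.1).card : ℝ) *
        (edgeProb α Δ N e * ∑ g : Finset (Fin N) → Bool, wgt α Δ N g * Gind Δ i t c g)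
      = (∑ e ∈ A, edgeProb α Δ N e * ((e ∩ c.2.2.1).card : ℝ)) *
        ∑ g : Finset (Fin N) → Bool, wgt α Δ N g * Gind Δ i t c g := by
        rw [Finset.sum_mul]
        exact Finset.sum_congr rfl fun e _ => by ring
    _ ≤ (lamMix α Δ * (c.2.1.card : ℝ)) *
        ∑ g : Finset (Fin N) → Bool, wgt α Δ N g * Gind Δ i t c g :=
        mul_le_mul_of_nonneg_right hcount hPnn

lemma rec_one (α : ℕ → ℝ) (Δ : ℕ) (hN : 1 ≤ N)
    (h0 : ∀ e : Finset (Fin N), 0 ≤ edgeProb α Δ N e)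
    (h1 : ∀ e : Finset (Fin N), edgeProb α Δ N e ≤ 1)
    (hα : ∀ p, 2 ≤ p → p ≤ Δ → 0 ≤ α p)
    (i : Fin N) (t : ℕ) :
    ∑ g : Finset (Fin N) → Bool, wgt α Δ N g * ((Iset (edgesOf Δ g) i (t + 1)).card : ℝ) ≤
      lamMix α Δ *
        ∑ g : Finset (Fin N) → Bool, wgt α Δ N g * ((Iset (edgesOf Δ g) i t).card : ℝ) := by
  classical
  rw [sum_decomp α Δ i t (fun g => ((Iset (edgesOf Δ g) i (t + 1)).card : ℝ))]
  have hRHS : lamMix α Δ *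
      ∑ g : Finset (Fin N) → Bool, wgt α Δ N g * ((Iset (edgesOf Δ g) i t).card : ℝ) =
      ∑ c : Finset (Fin N) × Finset (Fin N) × Finset (Fin N) × Finset (Finset (Fin N)),
        (lamMix α Δ * (c.2.1.card : ℝ)) *
          ∑ g : Finset (Fin N) → Bool, wgt α Δ N g * Gind Δ i t c g := by
    rw [sum_fiber_eval α Δ i t (fun c => lamMix α Δ * (c.2.1.card : ℝ)), Finset.mul_sum]
    exact Finset.sum_congr rfl fun g _ => by rw [Iset]; ring
  rw [hRHS]
  exact Finset.sum_le_sum fun c _ => rec_per_fiber_one α Δ hN h0 h1 hα i t c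
lemma rec_per_fiber_two (α : ℕ → ℝ) (Δ : ℕ) (hN : 1 ≤ N)
    (h0 : ∀ e : Finset (Fin N), 0 ≤ edgeProb α Δ N e)
    (h1 : ∀ e : Finset (Fin N), edgeProb α Δ N e ≤ 1)
    (hα : ∀ p, 2 ≤ p → p ≤ Δ → 0 ≤ α p)
    (i : Fin N) (t : ℕ)
    (c : Finset (Fin N) × Finset (Fin N) × Finset (Fin N) × Finset (Finset (Fin N))) :
    ∑ g : Finset (Fin N) → Bool,
        wgt α Δ N g * (Gind Δ i t c g * ((Iset (edgesOf Δ g) i (t + 1)).card : ℝ) ^ 2) ≤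
      ((lamMix α Δ * (c.2.1.card : ℝ)) ^ 2 +
          (∑ p ∈ Finset.Icc 2 Δ, (p : ℝ) * ((p : ℝ) - 1) ^ 2 * α p) * (c.2.1.card : ℝ)) *
        ∑ g : Finset (Fin N) → Bool, wgt α Δ N g * Gind Δ i t c g := by
  classical
  by_cases hre : ∃ g0 : Finset (Fin N) → Bool, explore (edgesOf Δ g0) i t = c
  swap
  · have hz : ∀ g : Finset (Fin N) → Bool, Gind Δ i t c g = 0 := by
      intro g; unfold Gind; rw [if_neg (fun h => hre ⟨g, h⟩)]
    simp [hz]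
  obtain ⟨g0, hg0⟩ := hre
  have hIS : c.2.1 ∩ c.2.2.1 = ∅ := by
    rw [← hg0]; exact explore_I_inter_S _ i t
  set A : Finset (Finset (Fin N)) := Finset.univ.filter
    (fun e : Finset (Fin N) => (e ∩ c.2.1).Nonempty ∧ e ∩ c.1 = ∅) with hA
  have hwnn : ∀ g : Finset (Fin N) → Bool, 0 ≤ wgt α Δ N g := fun g => wgt_nonneg h0 h1 g
  have hPnn : 0 ≤ ∑ g : Finset (Fin N) → Bool, wgt α Δ N g * Gind Δ i t c g :=
    Finset.sum_nonneg fun g _ => mul_nonneg (hwnn g) (Gind_nonneg Δ i t c g)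
  have hGupd : ∀ e ∈ A, ∀ (g : Finset (Fin N) → Bool) (b : Bool),
      Gind Δ i t c (Function.update g e b) = Gind Δ i t c g := by
    intro e he g b
    have heA : (e ∩ c.2.1).Nonempty ∧ e ∩ c.1 = ∅ := by simpa [hA] using he
    exact Gind_update Δ i t c e heA.2 g b
  -- pointwise bound
  have hpt : ∀ g : Finset (Fin N) → Bool,
      wgt α Δ N g * (Gind Δ i t c g * ((Iset (edgesOf Δ g) i (t + 1)).card : ℝ) ^ 2) ≤
      ∑ e ∈ A, ∑ f ∈ A, (((e ∩ c.2.2.1).card : ℝ) * ((f ∩ c.2.2.1).card : ℝ)) *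
        (wgt α Δ N g * (Gind Δ i t c g *
          ((if g e then (1 : ℝ) else 0) * (if g f then (1 : ℝ) else 0)))) := by
    intro g
    by_cases hTg : explore (edgesOf Δ g) i t = c
    · have hG1 : Gind Δ i t c g = 1 := by unfold Gind; rw [if_pos hTg]
      have hI1 : Iset (edgesOf Δ g) i (t + 1) =
          ((edgesOf Δ g).filter fun e => (e ∩ c.2.1).Nonempty ∧ e ∩ c.1 = ∅).biUnion
            (fun e => e ∩ c.2.2.1) := by
        rw [Iset, explore_succ, hTg]
      have hcard : ((Iset (edgesOf Δ g) i (t + 1)).card : ℝ) ≤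
          ∑ e ∈ A, ((e ∩ c.2.2.1).card : ℝ) * (if g e then (1 : ℝ) else 0) := by
        have hle2 : (Iset (edgesOf Δ g) i (t + 1)).card ≤
            ∑ e ∈ (edgesOf Δ g).filter
              (fun e => (e ∩ c.2.1).Nonempty ∧ e ∩ c.1 = ∅), (e ∩ c.2.2.1).card := by
          rw [hI1]; exact Finset.card_biUnion_le
        have hle3 : ∑ e ∈ (edgesOf Δ g).filter
              (fun e => (e ∩ c.2.1).Nonempty ∧ e ∩ c.1 = ∅), ((e ∩ c.2.2.1).card : ℝ) ≤
            ∑ e ∈ A.filter (fun e => g e = true), ((e ∩ c.2.2.1).card : ℝ) := by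
          refine Finset.sum_le_sum_of_subset_of_nonneg ?_ (fun _ _ _ => Nat.cast_nonneg _)
          intro e he
          simp only [edgesOf, hA, Finset.mem_filter, Finset.mem_univ, true_and] at he ⊢
          exact ⟨⟨he.2.1, he.2.2⟩, he.1.1⟩
        have hle4 : ∑ e ∈ A.filter (fun e => g e = true), ((e ∩ c.2.2.1).card : ℝ) =
            ∑ e ∈ A, ((e ∩ c.2.2.1).card : ℝ) * (if g e then (1 : ℝ) else 0) := by
          rw [Finset.sum_filter]
          refine Finset.sum_congr rfl fun e _ => ?_
          by_cases hge : g e = true <;> simp [hge]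
        calc ((Iset (edgesOf Δ g) i (t + 1)).card : ℝ)
            ≤ ∑ e ∈ (edgesOf Δ g).filter
                (fun e => (e ∩ c.2.1).Nonempty ∧ e ∩ c.1 = ∅), ((e ∩ c.2.2.1).card : ℝ) := by
              exact_mod_cast hle2
          _ ≤ _ := hle3
          _ = _ := hle4
      have hsq : ((Iset (edgesOf Δ g) i (t + 1)).card : ℝ) ^ 2 ≤
          (∑ e ∈ A, ((e ∩ c.2.2.1).card : ℝ) * (if g e then (1 : ℝ) else 0)) ^ 2 :=
        pow_le_pow_left₀ (Nat.cast_nonneg _) hcard 2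
      calc wgt α Δ N g * (Gind Δ i t c g * ((Iset (edgesOf Δ g) i (t + 1)).card : ℝ) ^ 2)
          ≤ wgt α Δ N g *
              (∑ e ∈ A, ((e ∩ c.2.2.1).card : ℝ) * (if g e then (1 : ℝ) else 0)) ^ 2 := by
            rw [hG1, one_mul]
            exact mul_le_mul_of_nonneg_left hsq (hwnn g)
        _ = ∑ e ∈ A, ∑ f ∈ A, (((e ∩ c.2.2.1).card : ℝ) * ((f ∩ c.2.2.1).card : ℝ)) *
              (wgt α Δ N g * (Gind Δ i t c g *
                ((if g e then (1 : ℝ) else 0) * (if g f then (1 : ℝ) else 0)))) := by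
            rw [hG1, pow_two, Finset.sum_mul_sum, Finset.mul_sum]
            refine Finset.sum_congr rfl fun e _ => ?_
            rw [Finset.mul_sum]
            exact Finset.sum_congr rfl fun f _ => by ring
    · have hG0 : Gind Δ i t c g = 0 := by unfold Gind; rw [if_neg hTg]
      simp [hG0]
  -- sum over g and swap sums
  have hsum1 : ∑ g : Finset (Fin N) → Bool,
      wgt α Δ N g * (Gind Δ i t c g * ((Iset (edgesOf Δ g) i (t + 1)).card : ℝ) ^ 2) ≤
      ∑ e ∈ A, ∑ f ∈ A, (((e ∩ c.2.2.1).card : ℝ) * ((f ∩ c.2.2.1).card : ℝ)) *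
        (∑ g : Finset (Fin N) → Bool, wgt α Δ N g * (Gind Δ i t c g *
          ((if g e then (1 : ℝ) else 0) * (if g f then (1 : ℝ) else 0)))) := by
    calc ∑ g : Finset (Fin N) → Bool,
        wgt α Δ N g * (Gind Δ i t c g * ((Iset (edgesOf Δ g) i (t + 1)).card : ℝ) ^ 2)
        ≤ ∑ g : Finset (Fin N) → Bool,
            ∑ e ∈ A, ∑ f ∈ A, (((e ∩ c.2.2.1).card : ℝ) * ((f ∩ c.2.2.1).card : ℝ)) *
              (wgt α Δ N g * (Gind Δ i t c g *
                ((if g e then (1 : ℝ) else 0) * (if g f then (1 : ℝ) else 0)))) :=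
          Finset.sum_le_sum fun g _ => hpt g
      _ = ∑ e ∈ A, ∑ g : Finset (Fin N) → Bool,
            ∑ f ∈ A, (((e ∩ c.2.2.1).card : ℝ) * ((f ∩ c.2.2.1).card : ℝ)) *
              (wgt α Δ N g * (Gind Δ i t c g *
                ((if g e then (1 : ℝ) else 0) * (if g f then (1 : ℝ) else 0)))) :=
          Finset.sum_comm
      _ = ∑ e ∈ A, ∑ f ∈ A, ∑ g : Finset (Fin N) → Bool,
            (((e ∩ c.2.2.1).card : ℝ) * ((f ∩ c.2.2.1).card : ℝ)) *
              (wgt α Δ N g * (Gind Δ i t c g *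
                ((if g e then (1 : ℝ) else 0) * (if g f then (1 : ℝ) else 0)))) :=
          Finset.sum_congr rfl fun e _ => Finset.sum_comm
      _ = _ := by
          refine Finset.sum_congr rfl fun e _ => Finset.sum_congr rfl fun f _ => ?_
          rw [Finset.mul_sum]
  refine hsum1.trans ?_
  -- evaluate the inner expectations
  have hK : ∀ e ∈ A, ∀ f ∈ A,
      (∑ g : Finset (Fin N) → Bool, wgt α Δ N g * (Gind Δ i t c g *
          ((if g e then (1 : ℝ) else 0) * (if g f then (1 : ℝ) else 0)))) ≤
      (edgeProb α Δ N e * edgeProb α Δ N f + if e = f then edgeProb α Δ N e else 0) *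
        ∑ g : Finset (Fin N) → Bool, wgt α Δ N g * Gind Δ i t c g := by
    intro e he f hf
    by_cases hef : e = f
    · subst hef
      have hind : ∀ g : Finset (Fin N) → Bool,
          (if g e then (1 : ℝ) else 0) * (if g e then (1 : ℝ) else 0) =
            (if g e then (1 : ℝ) else 0) := by
        intro g; by_cases hge : g e <;> simp [hge]
      have heval : ∑ g : Finset (Fin N) → Bool, wgt α Δ N g * (Gind Δ i t c g *
          ((if g e then (1 : ℝ) else 0) * (if g e then (1 : ℝ) else 0))) =
          edgeProb α Δ N e * ∑ g : Finset (Fin N) → Bool, wgt α Δ N g * Gind Δ i t c g := by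
        rw [Finset.sum_congr rfl fun g _ => by rw [hind g]]
        exact sum_factor_coord α Δ e (Gind Δ i t c) (hGupd e he)
      rw [heval, if_pos rfl]
      have hq := h0 e
      nlinarith [hPnn, mul_nonneg (mul_nonneg hq hq) hPnn]
    · have hstep : ∀ g : Finset (Fin N) → Bool,
          wgt α Δ N g * (Gind Δ i t c g *
            ((if g e then (1 : ℝ) else 0) * (if g f then (1 : ℝ) else 0))) =
          wgt α Δ N g * ((fun g' : Finset (Fin N) → Bool =>
            Gind Δ i t c g' * (if g' e then (1 : ℝ) else 0)) g * (if g f then (1 : ℝ) else 0)) := by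
        intro g; ring
      have hinv2 : ∀ (g : Finset (Fin N) → Bool) (b : Bool),
          (fun g' : Finset (Fin N) → Bool =>
            Gind Δ i t c g' * (if g' e then (1 : ℝ) else 0)) (Function.update g f b) =
          (fun g' : Finset (Fin N) → Bool =>
            Gind Δ i t c g' * (if g' e then (1 : ℝ) else 0)) g := by
        intro g b
        simp only
        rw [hGupd f hf g b, Function.update_of_ne hef b g]
      have heval : ∑ g : Finset (Fin N) → Bool, wgt α Δ N g * (Gind Δ i t c g *
          ((if g e then (1 : ℝ) else 0) * (if g f then (1 : ℝ) else 0))) =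
          edgeProb α Δ N f * (edgeProb α Δ N e *
            ∑ g : Finset (Fin N) → Bool, wgt α Δ N g * Gind Δ i t c g) := by
        rw [Finset.sum_congr rfl fun g _ => hstep g,
          sum_factor_coord α Δ f _ hinv2,
          sum_factor_coord α Δ e (Gind Δ i t c) (hGupd e he)]
      rw [heval, if_neg hef]
      exact le_of_eq (by ring)
  -- combine
  have hcnn : ∀ e : Finset (Fin N), (0 : ℝ) ≤ ((e ∩ c.2.2.1).card : ℝ) :=
    fun e => Nat.cast_nonneg _
  have hstep2 : ∑ e ∈ A, ∑ f ∈ A,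
      (((e ∩ c.2.2.1).card : ℝ) * ((f ∩ c.2.2.1).card : ℝ)) *
        (∑ g : Finset (Fin N) → Bool, wgt α Δ N g * (Gind Δ i t c g *
          ((if g e then (1 : ℝ) else 0) * (if g f then (1 : ℝ) else 0)))) ≤
      ∑ e ∈ A, ∑ f ∈ A,
        ((edgeProb α Δ N e * ((e ∩ c.2.2.1).card : ℝ)) *
          (edgeProb α Δ N f * ((f ∩ c.2.2.1).card : ℝ)) *
            (∑ g : Finset (Fin N) → Bool, wgt α Δ N g * Gind Δ i t c g) +
          (if e = f then edgeProb α Δ N e * ((e ∩ c.2.2.1).card : ℝ) ^ 2 *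
            (∑ g : Finset (Fin N) → Bool, wgt α Δ N g * Gind Δ i t c g) else 0)) := by
    refine Finset.sum_le_sum fun e he => Finset.sum_le_sum fun f hf => ?_
    have h1 := mul_le_mul_of_nonneg_left (hK e he f hf)
      (mul_nonneg (hcnn e) (hcnn f))
    refine h1.trans (le_of_eq ?_)
    by_cases hef : e = f
    · subst hef; rw [if_pos rfl, if_pos rfl]; ring
    · rw [if_neg hef, if_neg hef]; ring
  refine hstep2.trans ?_
  -- algebraic evaluation of the right-hand side
  have hinner : ∀ e ∈ A, (∑ f ∈ A,
      ((edgeProb α Δ N e * ((e ∩ c.2.2.1).card : ℝ)) *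
          (edgeProb α Δ N f * ((f ∩ c.2.2.1).card : ℝ)) *
            (∑ g : Finset (Fin N) → Bool, wgt α Δ N g * Gind Δ i t c g) +
        (if e = f then edgeProb α Δ N e * ((e ∩ c.2.2.1).card : ℝ) ^ 2 *
          (∑ g : Finset (Fin N) → Bool, wgt α Δ N g * Gind Δ i t c g) else 0)))
      = (edgeProb α Δ N e * ((e ∩ c.2.2.1).card : ℝ)) *
          ((∑ f ∈ A, edgeProb α Δ N f * ((f ∩ c.2.2.1).card : ℝ)) *
            (∑ g : Finset (Fin N) → Bool, wgt α Δ N g * Gind Δ i t c g)) +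
        edgeProb α Δ N e * ((e ∩ c.2.2.1).card : ℝ) ^ 2 *
          (∑ g : Finset (Fin N) → Bool, wgt α Δ N g * Gind Δ i t c g) := by
    intro e he
    rw [Finset.sum_add_distrib]
    congr 1
    · rw [Finset.sum_mul, Finset.mul_sum]
      exact Finset.sum_congr rfl fun f _ => by ring
    · rw [Finset.sum_ite_eq A e, if_pos he]
  rw [Finset.sum_congr rfl hinner, Finset.sum_add_distrib, ← Finset.sum_mul, ← Finset.sum_mul]
  -- final numeric bound
  have hQ1 : ∑ e ∈ A, edgeProb α Δ N e * ((e ∩ c.2.2.1).card : ℝ) ≤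
      lamMix α Δ * (c.2.1.card : ℝ) := by
    have h := count_bound α Δ hN hα 1 c.2.1 c.1 c.2.2.1 hIS
    simp only [pow_one] at h
    rw [hA]
    refine h.trans (le_of_eq ?_)
    rw [lamMix]
  have hQ1nn : 0 ≤ ∑ e ∈ A, edgeProb α Δ N e * ((e ∩ c.2.2.1).card : ℝ) :=
    Finset.sum_nonneg fun e _ => mul_nonneg (h0 e) (hcnn e)
  have hQ2 : ∑ e ∈ A, edgeProb α Δ N e * ((e ∩ c.2.2.1).card : ℝ) ^ 2 ≤
      (∑ p ∈ Finset.Icc 2 Δ, (p : ℝ) * ((p : ℝ) - 1) ^ 2 * α p) * (c.2.1.card : ℝ) := by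
    have h := count_bound α Δ hN hα 2 c.2.1 c.1 c.2.2.1 hIS
    rw [hA]
    exact h
  have h1 : (∑ e ∈ A, edgeProb α Δ N e * ((e ∩ c.2.2.1).card : ℝ)) *
      ((∑ f ∈ A, edgeProb α Δ N f * ((f ∩ c.2.2.1).card : ℝ)) *
        (∑ g : Finset (Fin N) → Bool, wgt α Δ N g * Gind Δ i t c g)) ≤
      (lamMix α Δ * (c.2.1.card : ℝ)) * ((lamMix α Δ * (c.2.1.card : ℝ)) *
        (∑ g : Finset (Fin N) → Bool, wgt α Δ N g * Gind Δ i t c g)) := by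
    have hsq := mul_self_le_mul_self hQ1nn hQ1
    calc (∑ e ∈ A, edgeProb α Δ N e * ((e ∩ c.2.2.1).card : ℝ)) *
        ((∑ f ∈ A, edgeProb α Δ N f * ((f ∩ c.2.2.1).card : ℝ)) *
          (∑ g : Finset (Fin N) → Bool, wgt α Δ N g * Gind Δ i t c g))
        = ((∑ e ∈ A, edgeProb α Δ N e * ((e ∩ c.2.2.1).card : ℝ)) *
            (∑ e ∈ A, edgeProb α Δ N e * ((e ∩ c.2.2.1).card : ℝ))) *
          (∑ g : Finset (Fin N) → Bool, wgt α Δ N g * Gind Δ i t c g) := by ring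
      _ ≤ ((lamMix α Δ * (c.2.1.card : ℝ)) * (lamMix α Δ * (c.2.1.card : ℝ))) *
          (∑ g : Finset (Fin N) → Bool, wgt α Δ N g * Gind Δ i t c g) :=
          mul_le_mul_of_nonneg_right hsq hPnn
      _ = _ := by ring
  have h2 : (∑ e ∈ A, edgeProb α Δ N e * ((e ∩ c.2.2.1).card : ℝ) ^ 2) *
      (∑ g : Finset (Fin N) → Bool, wgt α Δ N g * Gind Δ i t c g) ≤
      ((∑ p ∈ Finset.Icc 2 Δ, (p : ℝ) * ((p : ℝ) - 1) ^ 2 * α p) * (c.2.1.card : ℝ)) *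
        (∑ g : Finset (Fin N) → Bool, wgt α Δ N g * Gind Δ i t c g) :=
    mul_le_mul_of_nonneg_right hQ2 hPnn
  calc _ ≤ (lamMix α Δ * (c.2.1.card : ℝ)) * ((lamMix α Δ * (c.2.1.card : ℝ)) *
        (∑ g : Finset (Fin N) → Bool, wgt α Δ N g * Gind Δ i t c g)) +
      ((∑ p ∈ Finset.Icc 2 Δ, (p : ℝ) * ((p : ℝ) - 1) ^ 2 * α p) * (c.2.1.card : ℝ)) *
        (∑ g : Finset (Fin N) → Bool, wgt α Δ N g * Gind Δ i t c g) := add_le_add h1 h2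
    _ = _ := by ring

lemma rec_two (α : ℕ → ℝ) (Δ : ℕ) (hN : 1 ≤ N)
    (h0 : ∀ e : Finset (Fin N), 0 ≤ edgeProb α Δ N e)
    (h1 : ∀ e : Finset (Fin N), edgeProb α Δ N e ≤ 1)
    (hα : ∀ p, 2 ≤ p → p ≤ Δ → 0 ≤ α p)
    (i : Fin N) (t : ℕ) :
    ∑ g : Finset (Fin N) → Bool,
        wgt α Δ N g * ((Iset (edgesOf Δ g) i (t + 1)).card : ℝ) ^ 2 ≤
      lamMix α Δ ^ 2 *
          ∑ g : Finset (Fin N) → Bool, wgt α Δ N g * ((Iset (edgesOf Δ g) i t).card : ℝ) ^ 2 +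
        (∑ p ∈ Finset.Icc 2 Δ, (p : ℝ) * ((p : ℝ) - 1) ^ 2 * α p) *
          ∑ g : Finset (Fin N) → Bool, wgt α Δ N g * ((Iset (edgesOf Δ g) i t).card : ℝ) := by
  classical
  rw [sum_decomp α Δ i t (fun g => ((Iset (edgesOf Δ g) i (t + 1)).card : ℝ) ^ 2)]
  have hRHS : lamMix α Δ ^ 2 *
          ∑ g : Finset (Fin N) → Bool, wgt α Δ N g * ((Iset (edgesOf Δ g) i t).card : ℝ) ^ 2 +
        (∑ p ∈ Finset.Icc 2 Δ, (p : ℝ) * ((p : ℝ) - 1) ^ 2 * α p) *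
          ∑ g : Finset (Fin N) → Bool, wgt α Δ N g * ((Iset (edgesOf Δ g) i t).card : ℝ) =
      ∑ c : Finset (Fin N) × Finset (Fin N) × Finset (Fin N) × Finset (Finset (Fin N)),
        ((lamMix α Δ * (c.2.1.card : ℝ)) ^ 2 +
            (∑ p ∈ Finset.Icc 2 Δ, (p : ℝ) * ((p : ℝ) - 1) ^ 2 * α p) * (c.2.1.card : ℝ)) *
          ∑ g : Finset (Fin N) → Bool, wgt α Δ N g * Gind Δ i t c g := by
    rw [sum_fiber_eval α Δ i t (fun c => (lamMix α Δ * (c.2.1.card : ℝ)) ^ 2 +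
      (∑ p ∈ Finset.Icc 2 Δ, (p : ℝ) * ((p : ℝ) - 1) ^ 2 * α p) * (c.2.1.card : ℝ)),
      Finset.mul_sum, Finset.mul_sum, ← Finset.sum_add_distrib]
    exact Finset.sum_congr rfl fun g _ => by rw [Iset]; ring
  rw [hRHS]
  exact Finset.sum_le_sum fun c _ => rec_per_fiber_two α Δ hN h0 h1 hα i t c
lemma lamMix_nonneg (α : ℕ → ℝ) (Δ : ℕ) (hα : ∀ p, 2 ≤ p → p ≤ Δ → 0 ≤ α p) :
    0 ≤ lamMix α Δ := by
  refine Finset.sum_nonneg fun p hp => ?_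
  obtain ⟨h2, hΔ⟩ := Finset.mem_Icc.mp hp
  have hpr : (2 : ℝ) ≤ (p : ℝ) := by exact_mod_cast h2
  exact mul_nonneg (mul_nonneg (by linarith) (by linarith)) (hα p h2 hΔ)

lemma lamMix'_nonneg (α : ℕ → ℝ) (Δ : ℕ) (hα : ∀ p, 2 ≤ p → p ≤ Δ → 0 ≤ α p) :
    0 ≤ lamMix' α Δ := by
  refine Finset.sum_nonneg fun p hp => ?_
  obtain ⟨h2, hΔ⟩ := Finset.mem_Icc.mp hp
  have hpr : (2 : ℝ) ≤ (p : ℝ) := by exact_mod_cast h2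
  exact mul_nonneg (mul_nonneg (mul_nonneg (by linarith) (by linarith)) (by linarith))
    (hα p h2 hΔ)

lemma lam2_eq (α : ℕ → ℝ) (Δ : ℕ) :
    ∑ p ∈ Finset.Icc 2 Δ, (p : ℝ) * ((p : ℝ) - 1) ^ 2 * α p =
      lamMix α Δ + lamMix' α Δ := by
  rw [lamMix, lamMix', ← Finset.sum_add_distrib]
  exact Finset.sum_congr rfl fun p _ => by ring

lemma lam2_nonneg (α : ℕ → ℝ) (Δ : ℕ) (hα : ∀ p, 2 ≤ p → p ≤ Δ → 0 ≤ α p) :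
    0 ≤ ∑ p ∈ Finset.Icc 2 Δ, (p : ℝ) * ((p : ℝ) - 1) ^ 2 * α p := by
  refine Finset.sum_nonneg fun p hp => ?_
  obtain ⟨h2, hΔ⟩ := Finset.mem_Icc.mp hp
  have hpr : (2 : ℝ) ≤ (p : ℝ) := by exact_mod_cast h2
  exact mul_nonneg (mul_nonneg (by linarith) (sq_nonneg _)) (hα p h2 hΔ)

lemma id3 (L : ℝ) (t : ℕ) :
    ∑ k ∈ Finset.Ico (t + 1) (2 * (t + 1)), L ^ (k - 1) =
      ∑ k ∈ Finset.Icc t (2 * t), L ^ k := by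
  have hmap : Finset.Ico (t + 1) (2 * (t + 1)) =
      (Finset.Ico t (2 * t + 1)).map (addRightEmbedding 1) := by
    rw [Finset.map_add_right_Ico]
    congr 1
  rw [hmap, Finset.sum_map]
  rw [← Finset.Ico_add_one_right_eq_Icc]
  refine Finset.sum_congr rfl fun k _ => ?_
  simp [addRightEmbedding]

lemma id1 (L : ℝ) (t : ℕ) :
    ∑ k ∈ Finset.Icc (t + 1) (2 * (t + 1)), L ^ k =
      L ^ 2 * ∑ k ∈ Finset.Icc t (2 * t), L ^ k + L ^ (t + 1) := by
  have hins : Finset.Icc (t + 1) (2 * (t + 1)) =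
      insert (t + 1) (Finset.Icc (t + 2) (2 * t + 2)) := by
    ext k
    simp only [Finset.mem_Icc, Finset.mem_insert]
    omega
  have hnot : (t + 1) ∉ Finset.Icc (t + 2) (2 * t + 2) := by
    simp only [Finset.mem_Icc]
    omega
  have hmap : Finset.Icc (t + 2) (2 * t + 2) =
      (Finset.Icc t (2 * t)).map (addRightEmbedding 2) := by
    rw [Finset.map_add_right_Icc]
  rw [hins, Finset.sum_insert hnot, hmap, Finset.sum_map, Finset.mul_sum]
  rw [add_comm]
  congr 1
  refine Finset.sum_congr rfl fun k _ => ?_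
  simp only [addRightEmbedding, Function.Embedding.coeFn_mk]
  rw [pow_add]
  ring

lemma id2 (L : ℝ) (t : ℕ) :
    ∑ k ∈ Finset.Icc t (2 * t), L ^ k =
      L ^ 2 * ∑ k ∈ Finset.Ico t (2 * t), L ^ (k - 1) + L ^ t := by
  cases t with
  | zero => simp
  | succ s =>
    rw [id3 L s, id1 L s]

lemma main_one (α : ℕ → ℝ) (Δ : ℕ) (hN : 1 ≤ N)
    (h0 : ∀ e : Finset (Fin N), 0 ≤ edgeProb α Δ N e)
    (h1 : ∀ e : Finset (Fin N), edgeProb α Δ N e ≤ 1)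
    (hα : ∀ p, 2 ≤ p → p ≤ Δ → 0 ≤ α p)
    (i : Fin N) : ∀ t : ℕ,
    ∑ g : Finset (Fin N) → Bool, wgt α Δ N g * ((Iset (edgesOf Δ g) i t).card : ℝ) ≤
      lamMix α Δ ^ t := by
  intro t
  induction t with
  | zero =>
    have hb : ∀ g : Finset (Fin N) → Bool, Iset (edgesOf Δ g) i 0 = {i} := fun g => rfl
    simp only [hb, Finset.card_singleton, Nat.cast_one, mul_one, pow_zero]
    exact le_of_eq (sum_wgt_one α Δ N h0 h1)
  | succ t ih =>
    calc ∑ g : Finset (Fin N) → Bool, wgt α Δ N g * ((Iset (edgesOf Δ g) i (t + 1)).card : ℝ)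
        ≤ lamMix α Δ *
            ∑ g : Finset (Fin N) → Bool, wgt α Δ N g * ((Iset (edgesOf Δ g) i t).card : ℝ) :=
          rec_one α Δ hN h0 h1 hα i t
      _ ≤ lamMix α Δ * lamMix α Δ ^ t :=
          mul_le_mul_of_nonneg_left ih (lamMix_nonneg α Δ hα)
      _ = lamMix α Δ ^ (t + 1) := by rw [pow_succ]; ring

lemma main_two (α : ℕ → ℝ) (Δ : ℕ) (hN : 1 ≤ N)
    (h0 : ∀ e : Finset (Fin N), 0 ≤ edgeProb α Δ N e)
    (h1 : ∀ e : Finset (Fin N), edgeProb α Δ N e ≤ 1)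
    (hα : ∀ p, 2 ≤ p → p ≤ Δ → 0 ≤ α p)
    (i : Fin N) : ∀ t : ℕ,
    ∑ g : Finset (Fin N) → Bool, wgt α Δ N g * ((Iset (edgesOf Δ g) i t).card : ℝ) ^ 2 ≤
      (∑ k ∈ Finset.Icc t (2 * t), lamMix α Δ ^ k) +
        lamMix' α Δ * ∑ k ∈ Finset.Ico t (2 * t), lamMix α Δ ^ (k - 1) := by
  intro t
  induction t with
  | zero =>
    have hb : ∀ g : Finset (Fin N) → Bool, Iset (edgesOf Δ g) i 0 = {i} := fun g => rfl
    simp only [hb, Finset.card_singleton, Nat.cast_one, one_pow, mul_one]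
    simp only [Nat.mul_zero, Finset.Icc_self, Finset.sum_singleton, pow_zero,
      Finset.Ico_self, Finset.sum_empty, mul_zero, add_zero]
    exact le_of_eq (sum_wgt_one α Δ N h0 h1)
  | succ t ih =>
    have r2 := rec_two α Δ hN h0 h1 hα i t
    have m1 := main_one α Δ hN h0 h1 hα i t
    have hbound : ∑ g : Finset (Fin N) → Bool,
        wgt α Δ N g * ((Iset (edgesOf Δ g) i (t + 1)).card : ℝ) ^ 2 ≤
        lamMix α Δ ^ 2 * ((∑ k ∈ Finset.Icc t (2 * t), lamMix α Δ ^ k) +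
          lamMix' α Δ * ∑ k ∈ Finset.Ico t (2 * t), lamMix α Δ ^ (k - 1)) +
        (∑ p ∈ Finset.Icc 2 Δ, (p : ℝ) * ((p : ℝ) - 1) ^ 2 * α p) * lamMix α Δ ^ t := by
      refine r2.trans (add_le_add ?_ ?_)
      · exact mul_le_mul_of_nonneg_left ih (sq_nonneg _)
      · exact mul_le_mul_of_nonneg_left m1 (lam2_nonneg α Δ hα)
    refine hbound.trans (le_of_eq ?_)
    rw [lam2_eq α Δ, id3 (lamMix α Δ) t, id1 (lamMix α Δ) t,
      id2 (lamMix α Δ) t, pow_succ]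
    ring
end Stmt10Aux2
end Stmt10Aux
/-- Growth estimates for the exploration process of the diluted mixed
`p`-spin random hypergraph: `E|I_t| ≤ λ^t` and
`E|I_t|² ≤ Σ_{k=t}^{2t} λ^k + λ' Σ_{k=t-1}^{2(t-1)} λ^k` (empty sums being `0`). -/
theorem stmt10 (Δ : ℕ) (hΔ : 2 ≤ Δ) (α : ℕ → ℝ)
    (hα : ∀ p, 2 ≤ p → p ≤ Δ → 0 < α p)
    (N : ℕ) (hN : 1 ≤ N)
    (hsize : ∀ p, 2 ≤ p → p ≤ Δ → α p * N ≤ (N.choose p : ℝ))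
    (i : Fin N) (t : ℕ) :
    (∫ g, ((Iset (edgesOf Δ g) i t).card : ℝ) ∂graphMeasure α Δ N) ≤ lamMix α Δ ^ t ∧
      (∫ g, ((Iset (edgesOf Δ g) i t).card : ℝ) ^ 2 ∂graphMeasure α Δ N)
        ≤ (∑ k ∈ Finset.Icc t (2 * t), lamMix α Δ ^ k) +
            lamMix' α Δ * ∑ k ∈ Finset.Ico t (2 * t), lamMix α Δ ^ (k - 1) := by
  have h0 : ∀ e : Finset (Fin N), 0 ≤ edgeProb α Δ N e :=
    edgeProb_nonneg α Δ N fun p h2 hΔ' => (hα p h2 hΔ').le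
  have h1 : ∀ e : Finset (Fin N), edgeProb α Δ N e ≤ 1 :=
    edgeProb_le_one α Δ N hsize
  have hαnn : ∀ p, 2 ≤ p → p ≤ Δ → 0 ≤ α p := fun p h2 hΔ' => (hα p h2 hΔ').le
  constructor
  · rw [integral_graphMeasure α Δ N h0 h1]
    exact main_one α Δ hN h0 h1 hαnn i t
  · rw [integral_graphMeasure α Δ N h0 h1]
    exact main_two α Δ hN h0 h1 hαnn i t
end
end

section
/- Let k ≥ 1, let J be a standard Gaussian vector in ℝ^k, J¹ and J² independent copies of J, and for t ≥ 0 set J^i(t) = e^{−t/2}J + √(1−e^{−t})J^i for i = 1, 2. Let m ≥ 1 and L_1, …, L_m : ℝ^k → ℝ be measurable functions with max_{1≤r≤m} E[L_r(J)²] < ∞, and define φ(t) = Σ_{r=1}^m E[L_r(J¹(t)) · L_r(J²(t))]. Then for all 0 ≤ s ≤ t, one has 0 ≤ φ(t) ≤ φ(s). -/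
open MeasureTheory ProbabilityTheory Real Finset

noncomputable section

/-! ### Spin models on hypergraphs -/

variable {N : ℕ}

section Aux14sec
open scoped ENNReal NNReal
namespace Aux14

lemma map_withDensity_comp {α β : Type*} [MeasurableSpace α] [MeasurableSpace β]
    (μ : Measure α) {g : α → β} (hg : Measurable g) {f : β → ℝ≥0∞} (hf : Measurable f) :
    Measure.map g (μ.withDensity (f ∘ g)) = (Measure.map g μ).withDensity f := by
  ext s hs
  rw [Measure.map_apply hg hs, withDensity_apply _ (hg hs), withDensity_apply _ hs,
    setLIntegral_map hs hf hg]
  rfl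

lemma gauss_eq_withDensity : gaussianReal 0 1 = volume.withDensity (gaussianPDF 0 1) :=
  gaussianReal_of_var_ne_zero 0 one_ne_zero

lemma prod_gauss_withDensity :
    (gaussianReal 0 1).prod (gaussianReal 0 1) =
      (volume : Measure (ℝ × ℝ)).withDensity
        (fun p => gaussianPDF 0 1 p.1 * gaussianPDF 0 1 p.2) := by
  rw [Measure.volume_eq_prod]
  refine Measure.prod_eq fun s t hs ht => ?_
  rw [withDensity_apply _ (hs.prod ht), ← Measure.prod_restrict,
    lintegral_prod_mul (measurable_gaussianPDF 0 1).aemeasurable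
      (measurable_gaussianPDF 0 1).aemeasurable,
    gauss_eq_withDensity, withDensity_apply _ hs, withDensity_apply _ ht]

lemma pdf_rot {a b : ℝ} (h : a ^ 2 + b ^ 2 = 1) (x y : ℝ) :
    gaussianPDF 0 1 (a * x + b * y) * gaussianPDF 0 1 (-b * x + a * y) =
      gaussianPDF 0 1 x * gaussianPDF 0 1 y := by
  simp only [gaussianPDF]
  rw [← ENNReal.ofReal_mul (gaussianPDFReal_nonneg _ _ _),
    ← ENNReal.ofReal_mul (gaussianPDFReal_nonneg _ _ _)]
  congr 1
  simp only [gaussianPDFReal, NNReal.coe_one, mul_one, sub_zero]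
  rw [mul_mul_mul_comm, ← Real.exp_add, mul_mul_mul_comm, ← Real.exp_add]
  congr 1
  field_simp
  congr 1
  linear_combination (-(x ^ 2) - y ^ 2) / 2 * h


def rot (a b : ℝ) : ℝ × ℝ → ℝ × ℝ := fun p => (a * p.1 + b * p.2, -b * p.1 + a * p.2)

lemma measurable_rot (a b : ℝ) : Measurable (rot a b) := by
  unfold rot; fun_prop

lemma rot_volume {a b : ℝ} (h : a ^ 2 + b ^ 2 = 1) :
    Measure.map (rot a b) (volume : Measure (ℝ × ℝ)) = volume := by
  set M : Matrix (Fin 2) (Fin 2) ℝ := !![a, b; -b, a] with hM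
  have hdet : M.det = 1 := by rw [hM, Matrix.det_fin_two_of]; linear_combination h
  have hlin : MeasurePreserving (Matrix.toLin' M) (volume : Measure (Fin 2 → ℝ)) volume := by
    refine ⟨LinearMap.continuous_of_finiteDimensional (Matrix.toLin' M) |>.measurable, ?_⟩
    rw [Real.map_matrix_volume_pi_eq_smul_volume_pi (by rw [hdet]; norm_num), hdet]
    norm_num
  have hcomp : rot a b = (MeasurableEquiv.finTwoArrow : (Fin 2 → ℝ) ≃ᵐ ℝ × ℝ) ∘
      (Matrix.toLin' M) ∘ (MeasurableEquiv.finTwoArrow : (Fin 2 → ℝ) ≃ᵐ ℝ × ℝ).symm := by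
    funext p
    simp [rot, MeasurableEquiv.finTwoArrow, Matrix.toLin'_apply, Matrix.mulVec,
      dotProduct, Fin.sum_univ_two, hM]
  rw [hcomp]
  exact ((volume_preserving_finTwoArrow ℝ).comp
    (hlin.comp ((volume_preserving_finTwoArrow ℝ).symm _))).map_eq

lemma rot_gauss {a b : ℝ} (h : a ^ 2 + b ^ 2 = 1) :
    Measure.map (rot a b) ((gaussianReal 0 1).prod (gaussianReal 0 1)) =
      (gaussianReal 0 1).prod (gaussianReal 0 1) := by
  rw [prod_gauss_withDensity]
  have hD : (fun p : ℝ × ℝ => gaussianPDF 0 1 p.1 * gaussianPDF 0 1 p.2) ∘ rot a b =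
      fun p => gaussianPDF 0 1 p.1 * gaussianPDF 0 1 p.2 :=
    funext fun p => pdf_rot h p.1 p.2
  have hDm : Measurable (fun p : ℝ × ℝ => gaussianPDF 0 1 p.1 * gaussianPDF 0 1 p.2) :=
    ((measurable_gaussianPDF 0 1).comp measurable_fst).mul
      ((measurable_gaussianPDF 0 1).comp measurable_snd)
  conv_lhs => rw [← hD]
  rw [map_withDensity_comp _ (measurable_rot a b) hDm, rot_volume h]

lemma comb_gauss {a b : ℝ} (h : a ^ 2 + b ^ 2 = 1) :
    MeasurePreserving (fun p : ℝ × ℝ => a * p.1 + b * p.2)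
      ((gaussianReal 0 1).prod (gaussianReal 0 1)) (gaussianReal 0 1) := by
  refine ⟨by fun_prop, ?_⟩
  have hc : (fun p : ℝ × ℝ => a * p.1 + b * p.2) = Prod.fst ∘ rot a b := rfl
  rw [hc, ← Measure.map_map measurable_fst (measurable_rot a b), rot_gauss h]
  simp

lemma comb_gaussPi (k : ℕ) {a b : ℝ} (h : a ^ 2 + b ^ 2 = 1) :
    MeasurePreserving (fun p : ((Fin k → ℝ) × (Fin k → ℝ)) => fun l => a * p.1 l + b * p.2 l)
      ((gaussianPi (Fin k)).prod (gaussianPi (Fin k))) (gaussianPi (Fin k)) := by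
  have h1 : MeasurePreserving (MeasurableEquiv.arrowProdEquivProdArrow ℝ ℝ (Fin k)).symm
      ((gaussianPi (Fin k)).prod (gaussianPi (Fin k)))
      (Measure.pi fun _ => (gaussianReal 0 1).prod (gaussianReal 0 1)) :=
    (measurePreserving_arrowProdEquivProdArrow ℝ ℝ (Fin k)
      (fun _ => gaussianReal 0 1) (fun _ => gaussianReal 0 1)).symm _
  have h2 : MeasurePreserving (fun (x : Fin k → ℝ × ℝ) l => a * (x l).1 + b * (x l).2)
      (Measure.pi fun _ => (gaussianReal 0 1).prod (gaussianReal 0 1)) (gaussianPi (Fin k)) :=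
    measurePreserving_pi _ _ (fun _ => comb_gauss h)
  have heq : (fun (x : Fin k → ℝ × ℝ) l => a * (x l).1 + b * (x l).2) ∘
      ⇑(MeasurableEquiv.arrowProdEquivProdArrow ℝ ℝ (Fin k)).symm =
      fun p : ((Fin k → ℝ) × (Fin k → ℝ)) => fun l => a * p.1 l + b * p.2 l := by
    funext p
    simp [MeasurableEquiv.arrowProdEquivProdArrow, Equiv.arrowProdEquivProdArrow]
  rw [← heq]
  exact h2.comp h1

lemma mp_fst (k : ℕ) : MeasurePreserving
    (fun ω : (Fin k → ℝ) × ((Fin k → ℝ) × (Fin k → ℝ)) => (ω.1, ω.2.1))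
    ((gaussianPi (Fin k)).prod ((gaussianPi (Fin k)).prod (gaussianPi (Fin k))))
    ((gaussianPi (Fin k)).prod (gaussianPi (Fin k))) := by
  have h : MeasurePreserving (Prod.fst : (Fin k → ℝ) × (Fin k → ℝ) → (Fin k → ℝ))
      ((gaussianPi (Fin k)).prod (gaussianPi (Fin k))) (gaussianPi (Fin k)) :=
    ⟨measurable_fst, by simp⟩
  exact (MeasurePreserving.id _).prod h

lemma mp_snd (k : ℕ) : MeasurePreserving
    (fun ω : (Fin k → ℝ) × ((Fin k → ℝ) × (Fin k → ℝ)) => (ω.1, ω.2.2))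
    ((gaussianPi (Fin k)).prod ((gaussianPi (Fin k)).prod (gaussianPi (Fin k))))
    ((gaussianPi (Fin k)).prod (gaussianPi (Fin k))) := by
  have h : MeasurePreserving (Prod.snd : (Fin k → ℝ) × (Fin k → ℝ) → (Fin k → ℝ))
      ((gaussianPi (Fin k)).prod (gaussianPi (Fin k))) (gaussianPi (Fin k)) :=
    ⟨measurable_snd, by simp⟩
  exact (MeasurePreserving.id _).prod h

/-- The Mehler / Ornstein–Uhlenbeck averaging operator. -/
def U (k : ℕ) (ρ : ℝ) (f : (Fin k → ℝ) → ℝ) (x : Fin k → ℝ) : ℝ :=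
  ∫ y, f (fun l => ρ * x l + Real.sqrt (1 - ρ ^ 2) * y l) ∂gaussianPi (Fin k)

lemma measurable_comb (k : ℕ) (a b : ℝ) :
    Measurable (fun p : ((Fin k → ℝ) × (Fin k → ℝ)) => fun l => a * p.1 l + b * p.2 l) := by
  fun_prop

lemma stronglyMeasurable_U (k : ℕ) (ρ : ℝ) {f : (Fin k → ℝ) → ℝ} (hf : Measurable f) :
    StronglyMeasurable (U k ρ f) := by
  have : StronglyMeasurable fun p : ((Fin k → ℝ) × (Fin k → ℝ)) =>
      f (fun l => ρ * p.1 l + Real.sqrt (1 - ρ ^ 2) * p.2 l) :=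
    (hf.comp (measurable_comb k ρ _)).stronglyMeasurable
  exact this.integral_prod_right'

lemma rep (k : ℕ) {f : (Fin k → ℝ) → ℝ} (hf : Measurable f)
    (hf2 : MemLp f 2 (gaussianPi (Fin k)))
    {ρ σ : ℝ} (hσ : σ = Real.sqrt (1 - ρ ^ 2)) (h1 : ρ ^ 2 + σ ^ 2 = 1) :
    ∫ ω : (Fin k → ℝ) × ((Fin k → ℝ) × (Fin k → ℝ)),
      f (fun l => ρ * ω.1 l + σ * ω.2.1 l) * f (fun l => ρ * ω.1 l + σ * ω.2.2 l)
      ∂((gaussianPi (Fin k)).prod ((gaussianPi (Fin k)).prod (gaussianPi (Fin k)))) =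
    ∫ x, (U k ρ f x) ^ 2 ∂gaussianPi (Fin k) := by
  have hT1 : MeasurePreserving
      (fun ω : (Fin k → ℝ) × ((Fin k → ℝ) × (Fin k → ℝ)) => fun l => ρ * ω.1 l + σ * ω.2.1 l)
      ((gaussianPi (Fin k)).prod ((gaussianPi (Fin k)).prod (gaussianPi (Fin k))))
      (gaussianPi (Fin k)) := (comb_gaussPi k h1).comp (mp_fst k)
  have hT2 : MeasurePreserving
      (fun ω : (Fin k → ℝ) × ((Fin k → ℝ) × (Fin k → ℝ)) => fun l => ρ * ω.1 l + σ * ω.2.2 l)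
      ((gaussianPi (Fin k)).prod ((gaussianPi (Fin k)).prod (gaussianPi (Fin k))))
      (gaussianPi (Fin k)) := (comb_gaussPi k h1).comp (mp_snd k)
  have hsq : Integrable (fun x => f x ^ 2) (gaussianPi (Fin k)) := hf2.integrable_sq
  have hI1 : Integrable (fun ω : (Fin k → ℝ) × ((Fin k → ℝ) × (Fin k → ℝ)) =>
      f (fun l => ρ * ω.1 l + σ * ω.2.1 l) ^ 2)
      ((gaussianPi (Fin k)).prod ((gaussianPi (Fin k)).prod (gaussianPi (Fin k)))) :=
    (hT1.integrable_comp (hf.pow_const 2).aestronglyMeasurable).2 hsq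
  have hI2 : Integrable (fun ω : (Fin k → ℝ) × ((Fin k → ℝ) × (Fin k → ℝ)) =>
      f (fun l => ρ * ω.1 l + σ * ω.2.2 l) ^ 2)
      ((gaussianPi (Fin k)).prod ((gaussianPi (Fin k)).prod (gaussianPi (Fin k)))) :=
    (hT2.integrable_comp (hf.pow_const 2).aestronglyMeasurable).2 hsq
  have hF : Integrable (fun ω : (Fin k → ℝ) × ((Fin k → ℝ) × (Fin k → ℝ)) =>
      f (fun l => ρ * ω.1 l + σ * ω.2.1 l) * f (fun l => ρ * ω.1 l + σ * ω.2.2 l))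
      ((gaussianPi (Fin k)).prod ((gaussianPi (Fin k)).prod (gaussianPi (Fin k)))) := by
    have hB : Integrable (fun ω : (Fin k → ℝ) × ((Fin k → ℝ) × (Fin k → ℝ)) =>
        (f (fun l => ρ * ω.1 l + σ * ω.2.1 l) ^ 2 + f (fun l => ρ * ω.1 l + σ * ω.2.2 l) ^ 2) / 2)
        ((gaussianPi (Fin k)).prod ((gaussianPi (Fin k)).prod (gaussianPi (Fin k)))) :=
      (hI1.add hI2).div_const 2
    refine Integrable.mono' hB
      ((hf.comp (hT1.measurable)).mul (hf.comp (hT2.measurable))).aestronglyMeasurable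
      (Filter.Eventually.of_forall fun ω => ?_)
    have := sq_nonneg (f (fun l => ρ * ω.1 l + σ * ω.2.1 l) - f (fun l => ρ * ω.1 l + σ * ω.2.2 l))
    have := sq_nonneg (f (fun l => ρ * ω.1 l + σ * ω.2.1 l) + f (fun l => ρ * ω.1 l + σ * ω.2.2 l))
    rw [Real.norm_eq_abs, abs_le]
    constructor <;> nlinarith
  rw [MeasureTheory.integral_prod _ hF]
  refine integral_congr_ae (Filter.Eventually.of_forall fun x => ?_)
  show (∫ y : (Fin k → ℝ) × (Fin k → ℝ),
      (fun u => f (fun l => ρ * x l + σ * u l)) y.1 * (fun u => f (fun l => ρ * x l + σ * u l)) y.2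
      ∂((gaussianPi (Fin k)).prod (gaussianPi (Fin k)))) = U k ρ f x ^ 2
  have hpm := MeasureTheory.integral_prod_mul (μ := gaussianPi (Fin k)) (ν := gaussianPi (Fin k))
    (f := fun u : Fin k → ℝ => f (fun l => ρ * x l + σ * u l))
    (g := fun u : Fin k → ℝ => f (fun l => ρ * x l + σ * u l))
  rw [hpm, sq]
  subst hσ
  rfl


lemma integral_sq_comb (k : ℕ) {g : (Fin k → ℝ) → ℝ} (hg : Measurable g)
    {a b : ℝ} (h1 : a ^ 2 + b ^ 2 = 1) :
    ∫ p : (Fin k → ℝ) × (Fin k → ℝ), g (fun l => a * p.1 l + b * p.2 l) ^ 2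
      ∂((gaussianPi (Fin k)).prod (gaussianPi (Fin k))) =
    ∫ x, g x ^ 2 ∂gaussianPi (Fin k) := by
  have hT := comb_gaussPi k h1
  conv_rhs => rw [← hT.map_eq]
  exact (integral_map hT.measurable.aemeasurable (hg.pow_const 2).aestronglyMeasurable).symm

lemma contraction (k : ℕ) {g : (Fin k → ℝ) → ℝ} (hg : Measurable g)
    (hg2 : Integrable (fun x => g x ^ 2) (gaussianPi (Fin k)))
    {c : ℝ} (hc : c ^ 2 ≤ 1) :
    Integrable (fun x => (U k c g x) ^ 2) (gaussianPi (Fin k)) ∧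
      ∫ x, (U k c g x) ^ 2 ∂gaussianPi (Fin k) ≤ ∫ x, g x ^ 2 ∂gaussianPi (Fin k) := by
  have h1 : c ^ 2 + Real.sqrt (1 - c ^ 2) ^ 2 = 1 := by
    rw [Real.sq_sqrt (by linarith)]; ring
  have hT := comb_gaussPi k h1
  have hGsq : Integrable (fun p : (Fin k → ℝ) × (Fin k → ℝ) =>
      g (fun l => c * p.1 l + Real.sqrt (1 - c ^ 2) * p.2 l) ^ 2)
      ((gaussianPi (Fin k)).prod (gaussianPi (Fin k))) :=
    (hT.integrable_comp (hg.pow_const 2).aestronglyMeasurable).2 hg2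
  have hK : Integrable (fun x => ∫ y, g (fun l => c * x l + Real.sqrt (1 - c ^ 2) * y l) ^ 2
      ∂gaussianPi (Fin k)) (gaussianPi (Fin k)) := hGsq.integral_prod_left
  have hae : ∀ᵐ x ∂gaussianPi (Fin k), (U k c g x) ^ 2 ≤
      ∫ y, g (fun l => c * x l + Real.sqrt (1 - c ^ 2) * y l) ^ 2 ∂gaussianPi (Fin k) := by
    filter_upwards [hGsq.prod_right_ae] with x hx
    have hm : AEStronglyMeasurable (fun y => g (fun l => c * x l + Real.sqrt (1 - c ^ 2) * y l))
        (gaussianPi (Fin k)) := by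
      apply Measurable.aestronglyMeasurable; fun_prop
    have hmem : MemLp (fun y => g (fun l => c * x l + Real.sqrt (1 - c ^ 2) * y l)) 2
        (gaussianPi (Fin k)) := (memLp_two_iff_integrable_sq hm).2 hx
    have hv := ProbabilityTheory.variance_eq_sub hmem
    have hnn := ProbabilityTheory.variance_nonneg
      (fun y => g (fun l => c * x l + Real.sqrt (1 - c ^ 2) * y l)) (gaussianPi (Fin k))
    simp only [Pi.pow_apply] at hv
    have : U k c g x = ∫ y, g (fun l => c * x l + Real.sqrt (1 - c ^ 2) * y l)
        ∂gaussianPi (Fin k) := rfl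
    rw [this]
    linarith
  have hmU : AEStronglyMeasurable (fun x => (U k c g x) ^ 2) (gaussianPi (Fin k)) :=
    (((stronglyMeasurable_U k c hg).measurable).pow_const 2).aestronglyMeasurable
  have hint : Integrable (fun x => (U k c g x) ^ 2) (gaussianPi (Fin k)) := by
    refine Integrable.mono' hK hmU ?_
    filter_upwards [hae] with x hx
    rw [Real.norm_eq_abs, abs_of_nonneg (sq_nonneg _)]
    exact hx
  refine ⟨hint, ?_⟩
  calc ∫ x, (U k c g x) ^ 2 ∂gaussianPi (Fin k)
      ≤ ∫ x, ∫ y, g (fun l => c * x l + Real.sqrt (1 - c ^ 2) * y l) ^ 2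
          ∂gaussianPi (Fin k) ∂gaussianPi (Fin k) :=
        integral_mono_ae hint hK hae
    _ = ∫ p : (Fin k → ℝ) × (Fin k → ℝ), g (fun l => c * p.1 l + Real.sqrt (1 - c ^ 2) * p.2 l) ^ 2
          ∂((gaussianPi (Fin k)).prod (gaussianPi (Fin k))) :=
        (MeasureTheory.integral_prod _ hGsq).symm
    _ = ∫ x, g x ^ 2 ∂gaussianPi (Fin k) := integral_sq_comb k hg h1

lemma semigroup (k : ℕ) {f : (Fin k → ℝ) → ℝ} (hf : Measurable f)
    (hfi : Integrable f (gaussianPi (Fin k)))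
    {a c : ℝ} (ha0 : 0 < a) (ha1 : a ≤ 1) (hc0 : 0 < c) (hc1 : c ≤ 1) (hca : c * a < 1) :
    ∀ᵐ x ∂gaussianPi (Fin k), U k (c * a) f x = U k c (U k a f) x := by
  have hb2 : Real.sqrt (1 - a ^ 2) ^ 2 = 1 - a ^ 2 := Real.sq_sqrt (by nlinarith)
  have hs2 : Real.sqrt (1 - c ^ 2) ^ 2 = 1 - c ^ 2 := Real.sq_sqrt (by nlinarith)
  have hbtpos : (0:ℝ) < 1 - (c * a) ^ 2 := by nlinarith [mul_pos hc0 ha0]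
  have hbt0 : 0 < Real.sqrt (1 - (c * a) ^ 2) := Real.sqrt_pos.2 hbtpos
  have hbt2 : Real.sqrt (1 - (c * a) ^ 2) ^ 2 = 1 - (c * a) ^ 2 := Real.sq_sqrt (by linarith)
  set b := Real.sqrt (1 - a ^ 2) with hbdef
  set s' := Real.sqrt (1 - c ^ 2) with hsdef
  set bt := Real.sqrt (1 - (c * a) ^ 2) with hbtdef
  set α := a * s' / bt with hαdef
  set β := b / bt with hβdef
  have hαβ : α ^ 2 + β ^ 2 = 1 := by
    rw [hαdef, hβdef]
    field_simp
    rw [hs2, hb2, hbt2]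
    ring
  have hca1 : (c * a) ^ 2 + bt ^ 2 = 1 := by rw [hbt2]; ring
  -- the full triple map is measure preserving
  have hM3 : MeasurePreserving
      (fun ω : (Fin k → ℝ) × ((Fin k → ℝ) × (Fin k → ℝ)) =>
        fun l => (c * a) * ω.1 l + bt * (α * ω.2.1 l + β * ω.2.2 l))
      ((gaussianPi (Fin k)).prod ((gaussianPi (Fin k)).prod (gaussianPi (Fin k))))
      (gaussianPi (Fin k)) := by
    have h1 := (comb_gaussPi k hca1).comp
      ((MeasurePreserving.id (gaussianPi (Fin k))).prod (comb_gaussPi k hαβ))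
    convert h1 using 1
    rfl
  have hbtα : bt * α = a * s' := by rw [hαdef]; field_simp
  have hbtβ : bt * β = b := by rw [hβdef]; field_simp
  have hM3' : MeasurePreserving
      (fun ω : (Fin k → ℝ) × ((Fin k → ℝ) × (Fin k → ℝ)) =>
        fun l => (c * a) * ω.1 l + (a * s' * ω.2.1 l + b * ω.2.2 l))
      ((gaussianPi (Fin k)).prod ((gaussianPi (Fin k)).prod (gaussianPi (Fin k))))
      (gaussianPi (Fin k)) := by
    convert hM3 using 2 with ω
    funext l
    rw [← hbtα, ← hbtβ]
    ring
  have hG : Integrable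
      (fun ω : (Fin k → ℝ) × ((Fin k → ℝ) × (Fin k → ℝ)) =>
        f (fun l => (c * a) * ω.1 l + (a * s' * ω.2.1 l + b * ω.2.2 l)))
      ((gaussianPi (Fin k)).prod ((gaussianPi (Fin k)).prod (gaussianPi (Fin k)))) :=
    (hM3'.integrable_comp hfi.aestronglyMeasurable).2 hfi
  filter_upwards [hG.prod_right_ae] with x hx
  -- Step A : rewrite U (c*a) f x as a double integral
  have stepA : U k (c * a) f x = ∫ p : (Fin k → ℝ) × (Fin k → ℝ),
      f (fun l => (c * a) * x l + (a * s' * p.1 l + b * p.2 l))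
      ∂((gaussianPi (Fin k)).prod (gaussianPi (Fin k))) := by
    have hT := comb_gaussPi k hαβ
    have h1 : U k (c * a) f x = ∫ w, f (fun l => (c * a) * x l + bt * w l)
        ∂(Measure.map (fun p : (Fin k → ℝ) × (Fin k → ℝ) => fun l => α * p.1 l + β * p.2 l)
          ((gaussianPi (Fin k)).prod (gaussianPi (Fin k)))) := by
      rw [hT.map_eq]; rfl
    rw [h1, integral_map (f := fun w : Fin k → ℝ => f (fun l => (c * a) * x l + bt * w l))
      hT.measurable.aemeasurable
      (Measurable.aestronglyMeasurable (by fun_prop))]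
    refine integral_congr_ae (Filter.Eventually.of_forall fun p => ?_)
    show f (fun l => (c * a) * x l + bt * (α * p.1 l + β * p.2 l)) = _
    congr 1
    funext l
    rw [← hbtα, ← hbtβ]
    ring
  rw [stepA, MeasureTheory.integral_prod _ hx]
  -- Now identify the inner integral with U a f and the outer with U c
  have : ∀ z : Fin k → ℝ,
      (∫ y, f (fun l => (c * a) * x l + (a * s' * z l + b * y l)) ∂gaussianPi (Fin k)) =
      U k a f (fun l => c * x l + s' * z l) := by
    intro z
    refine integral_congr_ae (Filter.Eventually.of_forall fun y => ?_)
    show f (fun l => (c * a) * x l + (a * s' * z l + b * y l)) =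
      f (fun l => a * (c * x l + s' * z l) + b * y l)
    congr 1
    funext l
    ring
  calc (∫ z, ∫ y, f (fun l => (c * a) * x l + (a * s' * z l + b * y l))
        ∂gaussianPi (Fin k) ∂gaussianPi (Fin k))
      = ∫ z, U k a f (fun l => c * x l + s' * z l) ∂gaussianPi (Fin k) :=
        integral_congr_ae (Filter.Eventually.of_forall fun z => this z)
    _ = U k c (U k a f) x := rfl


end Aux14
end Aux14sec

/-- Monotonicity of `φ(t) = Σ_r E[L_r(J¹(t)) L_r(J²(t))]`:
for `0 ≤ s ≤ t`, one has `0 ≤ φ(t) ≤ φ(s)`. -/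
theorem stmt14 (k : ℕ) (hk : 1 ≤ k) (m : ℕ) (hm : 1 ≤ m)
    (L : Fin m → (Fin k → ℝ) → ℝ) (hLmeas : ∀ r, Measurable (L r))
    (hL2 : ∀ r, MemLp (L r) 2 (gaussianPi (Fin k)))
    (s t : ℝ) (hs : 0 ≤ s) (hst : s ≤ t) :
    0 ≤ phiFn k m L t ∧ phiFn k m L t ≤ phiFn k m L s := by
  have expsq : ∀ u : ℝ, Real.exp (-u / 2) ^ 2 = Real.exp (-u) := by
    intro u; rw [sq, ← Real.exp_add]; ring_nf
  have key : ∀ u : ℝ, 0 ≤ u →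
      phiFn k m L u = ∑ r : Fin m, ∫ x, (Aux14.U k (Real.exp (-u / 2)) (L r) x) ^ 2
        ∂gaussianPi (Fin k) := by
    intro u hu
    unfold phiFn tripleGauss
    refine Finset.sum_congr rfl fun r _ => ?_
    have hle : Real.exp (-u) ≤ 1 := Real.exp_le_one_iff.2 (by linarith)
    have hσ : Real.sqrt (1 - Real.exp (-u)) = Real.sqrt (1 - Real.exp (-u / 2) ^ 2) := by
      rw [expsq]
    have h1 : Real.exp (-u / 2) ^ 2 + Real.sqrt (1 - Real.exp (-u)) ^ 2 = 1 := by
      rw [expsq, Real.sq_sqrt (by linarith)]; ring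
    exact Aux14.rep k (hLmeas r) (hL2 r) hσ h1
  constructor
  · rw [key t (hs.trans hst)]
    exact Finset.sum_nonneg fun r _ => integral_nonneg fun x => sq_nonneg _
  · by_cases ht0 : t = 0
    · have hs0 : s = 0 := le_antisymm (ht0 ▸ hst) hs
      rw [ht0, hs0]
    · have ht : 0 < t := lt_of_le_of_ne (hs.trans hst) (Ne.symm ht0)
      have ha0 : 0 < Real.exp (-s / 2) := Real.exp_pos _
      have hc0 : 0 < Real.exp (-(t - s) / 2) := Real.exp_pos _
      have ha1 : Real.exp (-s / 2) ≤ 1 := Real.exp_le_one_iff.2 (by linarith)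
      have hc1 : Real.exp (-(t - s) / 2) ≤ 1 := Real.exp_le_one_iff.2 (by linarith)
      have hcaeq : Real.exp (-t / 2) = Real.exp (-(t - s) / 2) * Real.exp (-s / 2) := by
        rw [← Real.exp_add]; ring_nf
      have hca : Real.exp (-(t - s) / 2) * Real.exp (-s / 2) < 1 := by
        rw [← hcaeq]
        exact Real.exp_lt_one_iff.2 (by linarith)
      rw [key t (hs.trans hst), key s hs]
      refine Finset.sum_le_sum fun r _ => ?_
      rw [hcaeq]
      have hsg := Aux14.semigroup k (hLmeas r)
        ((hL2 r).integrable one_le_two) ha0 ha1 hc0 hc1 hca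
      have hIa := Aux14.contraction k (hLmeas r) (hL2 r).integrable_sq
        (c := Real.exp (-s / 2)) (by nlinarith)
      have hIc := Aux14.contraction k
        (Aux14.stronglyMeasurable_U k (Real.exp (-s / 2)) (hLmeas r)).measurable
        hIa.1 (c := Real.exp (-(t - s) / 2)) (by nlinarith)
      calc ∫ x, (Aux14.U k (Real.exp (-(t - s) / 2) * Real.exp (-s / 2)) (L r) x) ^ 2
            ∂gaussianPi (Fin k)
          = ∫ x, (Aux14.U k (Real.exp (-(t - s) / 2))
              (Aux14.U k (Real.exp (-s / 2)) (L r)) x) ^ 2 ∂gaussianPi (Fin k) := by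
            refine integral_congr_ae ?_
            filter_upwards [hsg] with x hx
            rw [hx]
        _ ≤ ∫ x, (Aux14.U k (Real.exp (-s / 2)) (L r) x) ^ 2 ∂gaussianPi (Fin k) := hIc.2
end
end

section
/- Consider the generalized short-range model on any hypergraph G = ([N], E) with 0 ≤ β < ∞, under the discrete perturbation. If 0 ≤ t ≤ |E|^{−1}, then E⟨R(σ,τ)²⟩_t ≥ e^{−1} · E⟨R(σ¹,σ²)²⟩, where ⟨R(σ¹,σ²)²⟩ denotes the Gibbs average of the squared overlap of two independent replicas σ¹, σ² drawn from the unperturbed Gibbs measure G_{J,β}. -/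
open MeasureTheory ProbabilityTheory Real Finset

noncomputable section

/-! ### Spin models on hypergraphs -/

variable {N : ℕ}

/-! ### Auxiliary lemmas for `stmt18` -/

lemma my_gibbs2_nonneg {N : ℕ} (β : ℝ) (H₁ H₂ : (Fin N → Bool) → ℝ)
    {f : (Fin N → Bool) → (Fin N → Bool) → ℝ} (hf : ∀ σ τ, 0 ≤ f σ τ) :
    0 ≤ gibbs2 β H₁ H₂ f := by
  apply div_nonneg
  · exact Finset.sum_nonneg fun σ _ => Finset.sum_nonneg fun τ _ =>
      mul_nonneg (hf σ τ) (Real.exp_pos _).le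
  · exact Finset.sum_nonneg fun σ _ => Finset.sum_nonneg fun τ _ => (Real.exp_pos _).le

lemma my_gibbs2_le_one {N : ℕ} (β : ℝ) (H₁ H₂ : (Fin N → Bool) → ℝ)
    {f : (Fin N → Bool) → (Fin N → Bool) → ℝ} (hf : ∀ σ τ, f σ τ ≤ 1) :
    gibbs2 β H₁ H₂ f ≤ 1 := by
  have hpos : 0 < ∑ σ : Fin N → Bool, ∑ τ : Fin N → Bool,
      Real.exp (β * H₁ σ + β * H₂ τ) := by positivity
  rw [gibbs2, div_le_one hpos]
  exact Finset.sum_le_sum fun σ _ => Finset.sum_le_sum fun τ _ =>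
    mul_le_of_le_one_left (Real.exp_pos _).le (hf σ τ)

lemma my_overlap_sq_le_one {N : ℕ} (hN : 1 ≤ N) (σ τ : Fin N → Bool) :
    overlap σ τ ^ 2 ≤ 1 := by
  have habs : |∑ i, spin (σ i) * spin (τ i)| ≤ (N : ℝ) := by
    calc |∑ i, spin (σ i) * spin (τ i)| ≤ ∑ i, |spin (σ i) * spin (τ i)| :=
          Finset.abs_sum_le_sum_abs _ _
      _ ≤ ∑ _i : Fin N, (1 : ℝ) := by
          refine Finset.sum_le_sum fun i _ => ?_
          rw [abs_mul]
          have h1 : ∀ b, |spin b| = 1 := by intro b; unfold spin; cases b <;> norm_num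
          rw [h1, h1]; norm_num
      _ = (N : ℝ) := by simp
  have hNpos : (0 : ℝ) < N := by exact_mod_cast hN
  have hle : |overlap σ τ| ≤ 1 := by
    rw [overlap, abs_div, abs_of_pos hNpos, div_le_one hNpos]
    exact habs
  calc overlap σ τ ^ 2 = |overlap σ τ| ^ 2 := (sq_abs _).symm
    _ ≤ 1 ^ 2 := by gcongr
    _ = 1 := one_pow 2

lemma my_ham_congr {N : ℕ} (Edges : Finset (Finset (Fin N))) (ρ : ℕ → ℝ → ℝ)
    {J J' : Finset (Fin N) → ℝ} (h : ∀ e ∈ Edges, J e = J' e) (σ : Fin N → Bool) :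
    ham Edges ρ J σ = ham Edges ρ J' σ :=
  Finset.sum_congr rfl fun e he => by rw [h e he]

lemma my_measurable_ham {N : ℕ} {α : Type*} [MeasurableSpace α]
    (Edges : Finset (Finset (Fin N))) (ρ : ℕ → ℝ → ℝ) (hρ : ∀ p, Measurable (ρ p))
    {g : α → Finset (Fin N) → ℝ} (hg : Measurable g) (σ : Fin N → Bool) :
    Measurable fun ω => ham Edges ρ (g ω) σ :=
  Finset.measurable_sum _ fun e _ =>
    (((hρ e.card).comp ((measurable_pi_apply e).comp hg)).mul_const _)

lemma my_measurable_gibbs2 {N : ℕ} {α : Type*} [MeasurableSpace α]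
    (Edges : Finset (Finset (Fin N))) (ρ : ℕ → ℝ → ℝ) (hρ : ∀ p, Measurable (ρ p))
    (β : ℝ) (f : (Fin N → Bool) → (Fin N → Bool) → ℝ)
    {g h : α → Finset (Fin N) → ℝ} (hg : Measurable g) (hh : Measurable h) :
    Measurable fun ω => gibbs2 β (ham Edges ρ (g ω)) (ham Edges ρ (h ω)) f := by
  unfold gibbs2
  have hbase : ∀ σ τ : Fin N → Bool,
      Measurable fun ω => Real.exp (β * ham Edges ρ (g ω) σ + β * ham Edges ρ (h ω) τ) :=
    fun σ τ => (((my_measurable_ham Edges ρ hρ hg σ).const_mul β).add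
      ((my_measurable_ham Edges ρ hρ hh τ).const_mul β)).exp
  exact (Finset.measurable_sum _ fun σ _ => Finset.measurable_sum _ fun τ _ =>
      (measurable_const.mul (hbase σ τ))).div
    (Finset.measurable_sum _ fun σ _ => Finset.measurable_sum _ fun τ _ => hbase σ τ)

lemma my_berBool_true {p : ℝ} : berBool p {true} = ENNReal.ofReal p := by
  simp [berBool, Measure.dirac_apply]

lemma my_berBool_univ {p : ℝ} (hp0 : 0 ≤ p) (hp1 : p ≤ 1) : berBool p Set.univ = 1 := by
  simp only [berBool, Measure.coe_add, Pi.add_apply, Measure.smul_apply, smul_eq_mul,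
    measure_univ, mul_one]
  rw [← ENNReal.ofReal_add hp0 (by linarith)]
  norm_num

lemma my_berPi_all {ι : Type*} [Fintype ι] [DecidableEq ι] (E : Finset ι) {p : ℝ}
    (hp0 : 0 ≤ p) (hp1 : p ≤ 1) :
    (Measure.pi fun _ : ι => berBool p) {B | ∀ e ∈ E, B e = true}
      = ENNReal.ofReal p ^ E.card := by
  have hset : {B : ι → Bool | ∀ e ∈ E, B e = true}
      = Set.pi Set.univ (fun e => if e ∈ E then {true} else Set.univ) := by
    ext B
    simp only [Set.mem_setOf_eq, Set.mem_pi, Set.mem_univ, forall_true_left]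
    constructor
    · intro h e; split
      · exact h e ‹_›
      · trivial
    · intro h e he; have := h e; rwa [if_pos he] at this
  rw [hset, Measure.pi_pi]
  have hval : ∀ e : ι,
      berBool p ((fun e => if e ∈ E then ({true} : Set Bool) else Set.univ) e)
        = if e ∈ E then ENNReal.ofReal p else 1 := by
    intro e
    simp only
    split
    · exact my_berBool_true
    · exact my_berBool_univ hp0 hp1
  simp_rw [hval]
  rw [Finset.prod_ite_mem, Finset.univ_inter, Finset.prod_const]

/-- In the generalized short-range model under the discrete perturbation,
if `0 ≤ t ≤ |E|⁻¹`, then `E⟨R(σ,τ)²⟩_t ≥ e⁻¹ E⟨R(σ¹,σ²)²⟩`. -/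
theorem stmt18
    (N Δ : ℕ) (hN : 1 ≤ N) (hΔ : 2 ≤ Δ)
    (Edges : Finset (Finset (Fin N)))
    (hcard : ∀ e ∈ Edges, 2 ≤ e.card ∧ e.card ≤ Δ)
    (ρ : ℕ → ℝ → ℝ) (hρmeas : ∀ p, Measurable (ρ p))
    (hρodd : ∀ p x, ρ p (-x) = - ρ p x)
    (t β : ℝ) (ht0 : 0 ≤ t) (ht : t ≤ ((Edges.card : ℝ))⁻¹) (hβ : 0 ≤ β) :
    Real.exp (-1) *
        (∫ ω, gibbs2 β (ham Edges ρ ω) (ham Edges ρ ω) (fun σ τ => overlap σ τ ^ 2)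
          ∂gaussianPi (Finset (Fin N)))
      ≤ discExp Edges ρ β t (fun σ τ => overlap σ τ ^ 2) := by
  classical
  set p : ℝ := Real.exp (-t) with hp_def
  have hp0 : 0 ≤ p := (Real.exp_pos _).le
  have hp1 : p ≤ 1 := Real.exp_le_one_iff.mpr (by linarith)
  set f : (Fin N → Bool) → (Fin N → Bool) → ℝ := fun σ τ => overlap σ τ ^ 2 with hf_def
  have hf0 : ∀ σ τ, 0 ≤ f σ τ := fun σ τ => sq_nonneg _
  have hf1 : ∀ σ τ, f σ τ ≤ 1 := fun σ τ => my_overlap_sq_le_one hN σ τ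
  set ν : Measure (Finset (Fin N) → Bool) := Measure.pi fun _ => berBool p with hν_def
  haveI hPB : IsProbabilityMeasure (berBool p) := ⟨my_berBool_univ hp0 hp1⟩
  haveI hPν : IsProbabilityMeasure ν := by rw [hν_def]; infer_instance
  haveI hPT : IsProbabilityMeasure (tripleGaussBer (Finset (Fin N)) p) := by
    unfold tripleGaussBer; infer_instance
  set G0 : (Finset (Fin N) → ℝ) → ℝ :=
    fun J => gibbs2 β (ham Edges ρ J) (ham Edges ρ J) f with hG0_def
  set ind : (Finset (Fin N) → Bool) → ℝ :=
    fun B => if ∀ e ∈ Edges, B e = true then 1 else 0 with hind_def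
  set F : (Finset (Fin N) → ℝ) × (Finset (Fin N) → ℝ) × (Finset (Fin N) → Bool) → ℝ :=
    fun ω => gibbs2 β (ham Edges ρ ω.1) (ham Edges ρ (discPerturb ω.1 ω.2.1 ω.2.2)) f
    with hF_def
  -- basic bounds
  have hG0nn : ∀ J, 0 ≤ G0 J := fun J => my_gibbs2_nonneg β _ _ hf0
  have hG0le : ∀ J, G0 J ≤ 1 := fun J => my_gibbs2_le_one β _ _ hf1
  have hFnn : ∀ ω, 0 ≤ F ω := fun ω => my_gibbs2_nonneg β _ _ hf0
  have hFle : ∀ ω, F ω ≤ 1 := fun ω => my_gibbs2_le_one β _ _ hf1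
  have hindnn : ∀ B, 0 ≤ ind B := by
    intro B; rw [hind_def]; dsimp only; split <;> norm_num
  have hindle : ∀ B, ind B ≤ 1 := by
    intro B; rw [hind_def]; dsimp only; split <;> norm_num
  -- measurability
  have hSmeas : MeasurableSet {B : Finset (Fin N) → Bool | ∀ e ∈ Edges, B e = true} := by
    have hrw : {B : Finset (Fin N) → Bool | ∀ e ∈ Edges, B e = true}
        = ⋂ e ∈ (Edges : Set (Finset (Fin N))),
            (fun B : Finset (Fin N) → Bool => B e) ⁻¹' {true} := by
      ext B; simp
    rw [hrw]
    exact MeasurableSet.biInter (Edges.countable_toSet) fun e _ =>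
      (measurable_pi_apply e) (measurableSet_singleton true)
  have hindmeas : Measurable ind := by
    rw [hind_def]
    exact Measurable.ite hSmeas measurable_const measurable_const
  have hG0meas : Measurable G0 := by
    rw [hG0_def]
    exact my_measurable_gibbs2 Edges ρ hρmeas β f measurable_id measurable_id
  have hdiscmeas : Measurable fun ω :
      (Finset (Fin N) → ℝ) × (Finset (Fin N) → ℝ) × (Finset (Fin N) → Bool) =>
      discPerturb ω.1 ω.2.1 ω.2.2 := by
    apply measurable_pi_lambda
    intro e
    have hcond : MeasurableSet {ω :
        (Finset (Fin N) → ℝ) × (Finset (Fin N) → ℝ) × (Finset (Fin N) → Bool) |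
        ω.2.2 e = true} := by
      have hrw : {ω : (Finset (Fin N) → ℝ) × (Finset (Fin N) → ℝ) ×
            (Finset (Fin N) → Bool) | ω.2.2 e = true}
          = (fun ω : (Finset (Fin N) → ℝ) × (Finset (Fin N) → ℝ) ×
              (Finset (Fin N) → Bool) => ω.2.2 e) ⁻¹' {true} := rfl
      rw [hrw]
      exact ((measurable_pi_apply e).comp (measurable_snd.comp measurable_snd))
        (measurableSet_singleton true)
    exact Measurable.ite hcond ((measurable_pi_apply e).comp measurable_fst)
      ((measurable_pi_apply e).comp (measurable_fst.comp measurable_snd))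
  have hFmeas : Measurable F := by
    rw [hF_def]
    exact my_measurable_gibbs2 Edges ρ hρmeas β f measurable_fst hdiscmeas
  -- the pointwise comparison
  set G : (Finset (Fin N) → ℝ) × (Finset (Fin N) → ℝ) × (Finset (Fin N) → Bool) → ℝ :=
    fun ω => G0 ω.1 * ind ω.2.2 with hG_def
  have hGF : ∀ ω, G ω ≤ F ω := by
    intro ω
    by_cases hB : ∀ e ∈ Edges, ω.2.2 e = true
    · have hham : ∀ σ, ham Edges ρ (discPerturb ω.1 ω.2.1 ω.2.2) σ
          = ham Edges ρ ω.1 σ := by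
        intro σ
        refine my_ham_congr Edges ρ (fun e he => ?_) σ
        simp [discPerturb, hB e he]
      have hFeq : F ω = G0 ω.1 := by
        rw [hF_def, hG0_def]
        dsimp only
        congr 1
        funext σ
        exact hham σ
      have hind1 : ind ω.2.2 = 1 := by rw [hind_def]; exact if_pos hB
      rw [hG_def]
      dsimp only
      rw [hind1, mul_one, hFeq]
    · have hind0 : ind ω.2.2 = 0 := by rw [hind_def]; exact if_neg hB
      rw [hG_def]
      dsimp only
      rw [hind0, mul_zero]
      exact hFnn ω
  -- integrability
  have hintF : Integrable F (tripleGaussBer (Finset (Fin N)) p) := by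
    refine (integrable_const (1 : ℝ)).mono' hFmeas.aestronglyMeasurable ?_
    filter_upwards with ω
    rw [Real.norm_eq_abs, abs_le]
    exact ⟨by linarith [hFnn ω], hFle ω⟩
  have hintG : Integrable G (tripleGaussBer (Finset (Fin N)) p) := by
    refine (integrable_const (1 : ℝ)).mono'
      ((hG0meas.comp measurable_fst).mul
        (hindmeas.comp (measurable_snd.comp measurable_snd))).aestronglyMeasurable ?_
    filter_upwards with ω
    show ‖G0 ω.1 * ind ω.2.2‖ ≤ 1
    rw [Real.norm_eq_abs, abs_le]
    constructor
    · have := mul_nonneg (hG0nn ω.1) (hindnn ω.2.2); linarith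
    · calc G0 ω.1 * ind ω.2.2 ≤ 1 * 1 :=
            mul_le_mul (hG0le ω.1) (hindle ω.2.2) (hindnn ω.2.2) zero_le_one
        _ = 1 := mul_one 1
  -- compute ∫ G
  have hG_int : ∫ ω, G ω ∂tripleGaussBer (Finset (Fin N)) p
      = (∫ J, G0 J ∂gaussianPi (Finset (Fin N))) * p ^ Edges.card := by
    rw [hG_def]
    unfold tripleGaussBer
    rw [integral_prod_mul G0
      (fun z : (Finset (Fin N) → ℝ) × (Finset (Fin N) → Bool) => ind z.2)]
    congr 1
    have h2 : (∫ z : (Finset (Fin N) → ℝ) × (Finset (Fin N) → Bool),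
          ind z.2 ∂(gaussianPi (Finset (Fin N))).prod ν)
        = ∫ B, ind B ∂ν := by
      have h := integral_prod_mul (μ := gaussianPi (Finset (Fin N))) (ν := ν)
        (fun _ : Finset (Fin N) → ℝ => (1 : ℝ)) ind
      simpa using h
    rw [h2]
    have hind_eq : ind = Set.indicator
        {B : Finset (Fin N) → Bool | ∀ e ∈ Edges, B e = true} 1 := by
      funext B
      rw [hind_def]
      simp only [Set.indicator_apply, Set.mem_setOf_eq, Pi.one_apply]
    rw [hind_eq, integral_indicator_one hSmeas, hν_def, measureReal_def, my_berPi_all Edges hp0 hp1]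
    rw [ENNReal.toReal_pow, ENNReal.toReal_ofReal hp0]
  -- conclude
  have hI_nonneg : 0 ≤ ∫ J, G0 J ∂gaussianPi (Finset (Fin N)) := integral_nonneg hG0nn
  have htc : t * (Edges.card : ℝ) ≤ 1 := by
    rcases Nat.eq_zero_or_pos Edges.card with hc | hc
    · rw [hc]; norm_num
    · have hcpos : (0 : ℝ) < Edges.card := by exact_mod_cast hc
      calc t * (Edges.card : ℝ) ≤ ((Edges.card : ℝ))⁻¹ * Edges.card :=
            mul_le_mul_of_nonneg_right ht hcpos.le
        _ = 1 := inv_mul_cancel₀ hcpos.ne'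
  have hppow : Real.exp (-1) ≤ p ^ Edges.card := by
    rw [hp_def, ← Real.exp_nat_mul]
    apply Real.exp_le_exp.mpr
    have hrw : (Edges.card : ℝ) * (-t) = -(t * Edges.card) := by ring
    rw [hrw]
    linarith
  have hdisc : discExp Edges ρ β t f = ∫ ω, F ω ∂tripleGaussBer (Finset (Fin N)) p := by
    rw [hF_def, hp_def]
    rfl
  have hlhs : (∫ ω, gibbs2 β (ham Edges ρ ω) (ham Edges ρ ω) f
      ∂gaussianPi (Finset (Fin N))) = ∫ J, G0 J ∂gaussianPi (Finset (Fin N)) := by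
    rw [hG0_def]
  calc Real.exp (-1) * (∫ ω, gibbs2 β (ham Edges ρ ω) (ham Edges ρ ω) f
        ∂gaussianPi (Finset (Fin N)))
      = Real.exp (-1) * ∫ J, G0 J ∂gaussianPi (Finset (Fin N)) := by rw [hlhs]
    _ ≤ p ^ Edges.card * ∫ J, G0 J ∂gaussianPi (Finset (Fin N)) :=
        mul_le_mul_of_nonneg_right hppow hI_nonneg
    _ = ∫ ω, G ω ∂tripleGaussBer (Finset (Fin N)) p := by rw [hG_int, mul_comm]
    _ ≤ ∫ ω, F ω ∂tripleGaussBer (Finset (Fin N)) p := integral_mono hintG hintF hGF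
    _ = discExp Edges ρ β t f := hdisc.symm
end
end
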